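/- arXiv:2003.09750 — 3 statements merged into one kernel-verified Lean document; each statement's English description precedes it below -/
import Mathlib

section
/- Let G be an essentially 4-connected graph and let Q be a cycle in G with |V(Q)| ≥ 5 such that every Q-bridge of G has at most three attachments. Then every component of G − V(Q) consists of a single vertex, whose degree in G is at most 3. If, in addition, every vertex of G has degree at least 3, then every Q-bridge of G with at least 3 vertices is isomorphic to K_{1,3}, and |V(Q)| = |V(G)| − b_G(Q). -/
open scoped Classical

namespace Paper

/-- An arc in the plane from `a` to `b`: a homeomorphic image of `[0,1]`
with endpoints `a` and `b`. -/
def IsArc (A : Set (ℝ × ℝ)) (a b : ℝ × ℝ) : Prop :=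
  ∃ f : ℝ → ℝ × ℝ, ContinuousOn f (Set.Icc 0 1) ∧ Set.InjOn f (Set.Icc 0 1) ∧
    f '' Set.Icc 0 1 = A ∧ f 0 = a ∧ f 1 = b

/-- A drawing of the graph `G` in the plane without crossings: vertices are mapped to
distinct points, each edge to an arc joining the images of its ends, arcs pass through
no vertex points other than their ends, and two distinct arcs meet only in images of
common end-vertices. -/
structure PlaneEmbedding {V : Type} (G : SimpleGraph V) where
  vmap : V → ℝ × ℝ
  vinj : Function.Injective vmap
  arc : Sym2 V → Set (ℝ × ℝ)
  arc_spec : ∀ u v : V, G.Adj u v → IsArc (arc s(u, v)) (vmap u) (vmap v)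
  arc_vertex : ∀ e ∈ G.edgeSet, ∀ w : V, vmap w ∈ arc e → w ∈ e
  arc_meet : ∀ e ∈ G.edgeSet, ∀ e' ∈ G.edgeSet, e ≠ e' →
    arc e ∩ arc e' ⊆ {p | ∃ w : V, w ∈ e ∧ w ∈ e' ∧ p = vmap w}

/-- The point set of a plane drawing. -/
def PlaneEmbedding.image {V : Type} {G : SimpleGraph V} (E : PlaneEmbedding G) :
    Set (ℝ × ℝ) :=
  Set.range E.vmap ∪ ⋃ e ∈ G.edgeSet, E.arc e

/-- A graph is planar if it admits a plane drawing. -/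
def IsPlanar {V : Type} (G : SimpleGraph V) : Prop := Nonempty (PlaneEmbedding G)

/-- `G` is `k`-connected: more than `k` vertices, and deleting fewer than `k`
vertices leaves a connected graph. -/
def IsKConnected {V : Type} [Fintype V] (k : ℕ) (G : SimpleGraph V) : Prop :=
  k < Fintype.card V ∧ ∀ S : Set V, S.ncard < k → (G.induce Sᶜ).Connected

/-- `G` is essentially 4-connected: it is connected and for every `S ⊆ V(G)` with
`|S| < 4`, `G − S` is connected or has exactly two components, one of which
has exactly one vertex. -/
def EssFourConnected {V : Type} [Fintype V] (G : SimpleGraph V) : Prop :=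
  G.Connected ∧ ∀ S : Set V, S.ncard < 4 →
    (G.induce Sᶜ).Connected ∨
      ∃ c₁ c₂ : (G.induce Sᶜ).ConnectedComponent, c₁ ≠ c₂ ∧
        (∀ c : (G.induce Sᶜ).ConnectedComponent, c = c₁ ∨ c = c₂) ∧
        (c₁.supp.ncard = 1 ∨ c₂.supp.ncard = 1)

/-- `S` is the vertex set of a connected component of `G − W`. -/
def IsCompOfComplement {V : Type} (G : SimpleGraph V) (W S : Set V) : Prop :=
  S.Nonempty ∧ Disjoint S W ∧ (G.induce S).Connected ∧
    ∀ u ∈ S, ∀ v : V, v ∉ W → G.Adj u v → v ∈ S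

/-- The subgraph of `G` induced by the edges of `G` incident with at least one vertex
of `S`. -/
def bridgeOf {V : Type} (G : SimpleGraph V) (S : Set V) : G.Subgraph where
  verts := S ∪ {v | ∃ u ∈ S, G.Adj u v}
  Adj a b := G.Adj a b ∧ (a ∈ S ∨ b ∈ S)
  adj_sub h := h.1
  edge_vert := by
    rintro a b ⟨hab, ha | hb⟩
    · exact Or.inl ha
    · exact Or.inr ⟨b, hb, hab.symm⟩
  symm := ⟨by rintro a b ⟨hab, h⟩; exact ⟨hab.symm, h.symm⟩⟩

/-- `B` is an `H`-bridge of `G`: either `B` is induced by a single edge of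
`E(G) ∖ E(H)` with both ends in `V(H)`, or `B` is induced by the edges of `G`
incident with at least one vertex of a single component of `G − H`. -/
def IsBridge {V : Type} (G : SimpleGraph V) (H B : G.Subgraph) : Prop :=
  (∃ (u v : V) (h : G.Adj u v), ¬ H.Adj u v ∧ u ∈ H.verts ∧ v ∈ H.verts ∧
      B = G.subgraphOfAdj h) ∨
    (∃ S : Set V, IsCompOfComplement G H.verts S ∧ B = bridgeOf G S)

/-- `b_G(H)`: the number of `H`-bridges of `G` with at least 3 vertices. -/
noncomputable def numBigBridges {V : Type} (G : SimpleGraph V) (H : G.Subgraph) : ℕ :=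
  Set.ncard {B : G.Subgraph | IsBridge G H B ∧ 3 ≤ B.verts.ncard}

/-- `H` is a Tutte subgraph of `G`: every `H`-bridge has at most three attachments. -/
def IsTutteSubgraph {V : Type} (G : SimpleGraph V) (H : G.Subgraph) : Prop :=
  ∀ B : G.Subgraph, IsBridge G H B → (B.verts ∩ H.verts).ncard ≤ 3

/-- `H` is an `F`-Tutte subgraph of `G` (`F` given by its edge set): `H` is a Tutte
subgraph and every `H`-bridge containing an edge of `F` has at most two attachments. -/
def IsTutteSubgraphWrt {V : Type} (G : SimpleGraph V) (F : Set (Sym2 V))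
    (H : G.Subgraph) : Prop :=
  IsTutteSubgraph G H ∧
    ∀ B : G.Subgraph, IsBridge G H B → (∃ e ∈ F, e ∈ B.edgeSet) →
      (B.verts ∩ H.verts).ncard ≤ 2

/-- The circumference of `G`: the length of a longest cycle. -/
noncomputable def circumference {V : Type} (G : SimpleGraph V) : ℕ :=
  sSup {k : ℕ | ∃ (r : V) (Q : G.Walk r r), Q.IsCycle ∧ Q.length = k}

/-- A cycle in `G` given with an orientation (referred to as the clockwise
orientation), presented as an injective cyclic enumeration `f : ZMod m → V`
of its vertices with consecutive vertices adjacent. -/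
structure OrientedCycle {V : Type} (G : SimpleGraph V) (m : ℕ) where
  f : ZMod m → V
  inj : Function.Injective f
  adj : ∀ i : ZMod m, G.Adj (f i) (f (i + 1))
  three_le : 3 ≤ m

/-- The vertex set of an oriented cycle. -/
def OrientedCycle.vertexSet {V : Type} {G : SimpleGraph V} {m : ℕ}
    (C : OrientedCycle G m) : Set V := Set.range C.f

/-- The edge set of an oriented cycle. -/
def OrientedCycle.edgeSet {V : Type} {G : SimpleGraph V} {m : ℕ}
    (C : OrientedCycle G m) : Set (Sym2 V) :=
  {e | ∃ i : ZMod m, e = s(C.f i, C.f (i + 1))}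

/-- `C` is the outer cycle of the drawing `E` of `G`: the drawing of `C` is the
frontier of the unbounded face (the unbounded connected component of the complement
of the drawing). -/
def OrientedCycle.IsOuterCycleOf {V : Type} {G : SimpleGraph V} {m : ℕ}
    (C : OrientedCycle G m) (E : PlaneEmbedding G) : Prop :=
  ∃ p : ℝ × ℝ, p ∉ E.image ∧
    ¬ Bornology.IsBounded (connectedComponentIn E.imageᶜ p) ∧
    frontier (connectedComponentIn E.imageᶜ p) =
      ⋃ i : ZMod m, E.arc s(C.f i, C.f (i + 1))

/-- A `k`-separation of `G`: a pair of edge-disjoint subgraphs covering `G`, neither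
contained in the other, whose vertex sets share exactly `k` vertices. -/
def IsKSeparation {V : Type} (G : SimpleGraph V) (k : ℕ) (G₁ G₂ : G.Subgraph) : Prop :=
  G₁ ⊔ G₂ = ⊤ ∧ Disjoint G₁.edgeSet G₂.edgeSet ∧
    (G₁.verts ∩ G₂.verts).ncard = k ∧ ¬ G₁ ≤ G₂ ∧ ¬ G₂ ≤ G₁

/-- A `k`-cut of `G`. -/
def IsKCut {V : Type} (G : SimpleGraph V) (k : ℕ) (T : Set V) : Prop :=
  T.ncard = k ∧ ∃ G₁ G₂ : G.Subgraph, IsKSeparation G k G₁ G₂ ∧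
    G₁.verts ∩ G₂.verts = T ∧ (G₁.verts \ G₂.verts).Nonempty ∧
    (G₂.verts \ G₁.verts).Nonempty

/-- `(G, C)` is a circuit graph: `G` is 2-connected, can be drawn in the plane with
outer cycle `C`, and every component of `G − T`, for every 2-cut `T`, contains a
vertex of `C`. -/
def IsCircuitGraph {V : Type} [Fintype V] (G : SimpleGraph V) {m : ℕ}
    (C : OrientedCycle G m) : Prop :=
  IsKConnected 2 G ∧ (∃ E : PlaneEmbedding G, C.IsOuterCycleOf E) ∧
    ∀ T : Set V, IsKCut G 2 T → ∀ S : Set V, IsCompOfComplement G T S →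
      ∃ i : ZMod m, C.f i ∈ S

/-- The clockwise segment of `C` from `C.f p` to `C.f q` (indices `p ≤ q` in `ℕ`,
taken mod `m`) is good: there is no 2-separation `(G₁,G₂)` of `G` with
`V(G₁ ∩ G₂) = {s,t}`, where `s = C.f i`, `t = C.f j` with `p ≤ i ≤ j ≤ q`,
the segment from `s` to `t` contained in `G₂`, and `|V(G₂)| ≥ 3`. -/
def SegGood {V : Type} {m : ℕ} (G : SimpleGraph V) (C : OrientedCycle G m)
    (p q : ℕ) : Prop :=
  ¬ ∃ (G₁ G₂ : G.Subgraph) (i j : ℕ), IsKSeparation G 2 G₁ G₂ ∧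
      p ≤ i ∧ i ≤ j ∧ j ≤ q ∧
      G₁.verts ∩ G₂.verts = {C.f (i : ZMod m), C.f (j : ZMod m)} ∧
      (∀ k : ℕ, i ≤ k → k ≤ j → C.f (k : ZMod m) ∈ G₂.verts) ∧
      (∀ k : ℕ, i ≤ k → k < j → G₂.Adj (C.f (k : ZMod m)) (C.f ((k : ZMod m) + 1))) ∧
      3 ≤ G₂.verts.ncard

/-- `τ_G(xy)` for `x`, `y` both vertices of `C` (`x = C.f p`, `y = C.f q`, `p ≤ q`
as natural numbers indexing clockwise): `2/3` if `xCy` is not good, `0` otherwise. -/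
noncomputable def tauVV {V : Type} {m : ℕ} (G : SimpleGraph V) (C : OrientedCycle G m)
    (p q : ℕ) : ℚ :=
  if SegGood G C p q then 0 else 2/3

/-- `τ_G(xy)` where exactly one of `x, y` is an edge of `C`; the underlying vertex
segment runs clockwise from `C.f p` to `C.f q` (`p ≤ q` as naturals), and the edge
of the pair is the edge of `C` attached at the appropriate end of this segment
(so `x` and `y` are incident iff `p = q`, and `|V(xCy)| = 2` iff `q = p + 1`):
`2/3` if the segment is not good; otherwise `2/3` if `x` and `y` are incident;
otherwise `1/3` if the segment has exactly two vertices; and `0` otherwise. -/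
noncomputable def tauVE {V : Type} {m : ℕ} (G : SimpleGraph V) (C : OrientedCycle G m)
    (p q : ℕ) : ℚ :=
  if ¬ SegGood G C p q then 2/3
  else if p = q then 2/3
  else if q = p + 1 then 1/3
  else 0

end Paper

namespace Paper

section Aux
variable {V : Type} {G : SimpleGraph V}

lemma walk_stays {A B : Set V} 
    (hcl : ∀ u ∈ A, ∀ w ∈ B, G.Adj u w → w ∈ A) :
    ∀ {x y : ↥B} (_ : (G.induce B).Walk x y), x.val ∈ A → y.val ∈ A := by
  intro x y p
  induction p with
  | nil => exact id
  | @cons a b c h q ih => intro hx; exact ih (hcl _ hx _ b.2 h)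

lemma walk_reach {A B : Set V} 
    (hcl : ∀ u ∈ A, ∀ w ∈ B, G.Adj u w → w ∈ A) :
    ∀ {x y : ↥B} (_ : (G.induce B).Walk x y) (hx : x.val ∈ A) (hy : y.val ∈ A),
      (G.induce A).Reachable ⟨x.val, hx⟩ ⟨y.val, hy⟩ := by
  intro x y p
  induction p with
  | nil => intro hx hy; exact SimpleGraph.Reachable.refl _
  | @cons a b c h q ih =>
      intro hx hy
      have hb : b.val ∈ A := hcl _ hx _ b.2 h
      exact (SimpleGraph.Adj.reachable (by exact h : (G.induce A).Adj ⟨a.val, hx⟩ ⟨b.val, hb⟩)).trans (ih hb hy)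

lemma reach_mono {A B : Set V} (hAB : A ⊆ B) {x y : ↥A}
    (h : (G.induce A).Reachable x y) :
    (G.induce B).Reachable ⟨x.val, hAB x.2⟩ ⟨y.val, hAB y.2⟩ := by
  let F : G.induce A →g G.induce B :=
    { toFun := fun z => ⟨z.val, hAB z.2⟩, map_rel' := fun {a b} hab => hab }
  exact h.map F

lemma comp_singleton [Fintype V] (hess : EssFourConnected G) {W : Set V}
    (hW5 : 5 ≤ W.ncard)
    (hatt3 : ∀ S : Set V, IsCompOfComplement G W S →
      ((bridgeOf G S).verts ∩ W).ncard ≤ 3)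
    {S : Set V} (hS : IsCompOfComplement G W S) :
    ∃ v : V, S = {v} ∧ G.neighborSet v ⊆ W ∧ (G.neighborSet v).ncard ≤ 3 := by
  obtain ⟨hne, hdisj, hconn, hcl⟩ := hS
  set T := (bridgeOf G S).verts ∩ W with hTdef
  have hT : T.ncard ≤ 3 := hatt3 S ⟨hne, hdisj, hconn, hcl⟩
  have hTsub : T ⊆ W := Set.inter_subset_right
  have hSW : ∀ s ∈ S, s ∉ W := fun s hs hw => Set.disjoint_left.mp hdisj hs hw
  have hSTc : S ⊆ Tᶜ := fun s hs ht => hSW s hs (hTsub ht)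
  have hclT : ∀ u ∈ S, ∀ w ∈ Tᶜ, G.Adj u w → w ∈ S := by
    intro u hu w hw hadj
    by_cases hwW : w ∈ W
    · exact absurd ⟨Or.inr ⟨u, hu, hadj⟩, hwW⟩ hw
    · exact hcl u hu w hwW hadj
  obtain ⟨s₀, hs₀⟩ := hne
  have hWT2 : 2 ≤ (W \ T).ncard := by
    rw [Set.ncard_diff hTsub]; omega
  obtain ⟨q₁, hq₁, q₂, hq₂, hq12⟩ := (Set.one_lt_ncard (Set.toFinite _)).mp (by omega : 1 < (W \ T).ncard)
  have hq₁T : (q₁ : V) ∈ Tᶜ := hq₁.2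
  have hq₂T : (q₂ : V) ∈ Tᶜ := hq₂.2
  have hq₁S : q₁ ∉ S := fun h => hSW _ h hq₁.1
  have hq₂S : q₂ ∉ S := fun h => hSW _ h hq₂.1
  have hsingle : S.ncard = 1 := by
    rcases hess.2 T (by omega) with hc | ⟨c₁, c₂, hne12, hall, hone⟩
    · exfalso
      obtain ⟨p⟩ := hc.preconnected ⟨s₀, hSTc hs₀⟩ ⟨q₁, hq₁T⟩
      exact hq₁S (walk_stays hclT p hs₀)
    · set c := (G.induce Tᶜ).connectedComponentMk ⟨s₀, hSTc hs₀⟩ with hcdef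
      have hsupp : Subtype.val '' c.supp = S := by
        ext u
        constructor
        · rintro ⟨⟨u, hu⟩, hmem, rfl⟩
          rw [SimpleGraph.ConnectedComponent.mem_supp_iff, hcdef,
            SimpleGraph.ConnectedComponent.eq] at hmem
          obtain ⟨p⟩ := hmem.symm
          exact walk_stays hclT p hs₀
        · intro hu
          refine ⟨⟨u, hSTc hu⟩, ?_, rfl⟩
          rw [SimpleGraph.ConnectedComponent.mem_supp_iff, hcdef,
            SimpleGraph.ConnectedComponent.eq]
          have := hconn.preconnected ⟨u, hu⟩ ⟨s₀, hs₀⟩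
          exact reach_mono hSTc this
      set c' := (G.induce Tᶜ).connectedComponentMk ⟨q₁, hq₁T⟩ with hc'def
      have hcc' : c ≠ c' := by
        intro h
        apply hq₁S
        rw [← hsupp]
        exact ⟨⟨q₁, hq₁T⟩, by rw [SimpleGraph.ConnectedComponent.mem_supp_iff]; exact h.symm, rfl⟩
      have hq2c : (G.induce Tᶜ).connectedComponentMk ⟨q₂, hq₂T⟩ ≠ c := by
        intro h
        apply hq₂S
        rw [← hsupp]
        exact ⟨⟨q₂, hq₂T⟩, by rw [SimpleGraph.ConnectedComponent.mem_supp_iff]; exact h, rfl⟩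
      have hall' : ∀ d : (G.induce Tᶜ).ConnectedComponent, d = c ∨ d = c' := by
        intro d
        rcases hall c with h1 | h1 <;> rcases hall c' with h2 | h2
        · exact absurd (h1.trans h2.symm) hcc'
        · rcases hall d with h3 | h3
          · exact Or.inl (h3.trans h1.symm)
          · exact Or.inr (h3.trans h2.symm)
        · rcases hall d with h3 | h3
          · exact Or.inr (h3.trans h2.symm)
          · exact Or.inl (h3.trans h1.symm)
        · exact absurd (h1.trans h2.symm) hcc'
      have hq2c' : (G.induce Tᶜ).connectedComponentMk ⟨q₂, hq₂T⟩ = c' :=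
        (hall' _).resolve_left hq2c
      have hc'2 : 2 ≤ c'.supp.ncard := by
        rw [show (2:ℕ) = 1 + 1 from rfl]
        refine (Set.one_lt_ncard (Set.toFinite _)).mpr ⟨⟨q₁, hq₁T⟩, ?_, ⟨q₂, hq₂T⟩, ?_, ?_⟩
        · exact SimpleGraph.ConnectedComponent.mem_supp_iff _ _ |>.mpr rfl
        · exact SimpleGraph.ConnectedComponent.mem_supp_iff _ _ |>.mpr hq2c'
        · intro h; exact hq12 (congrArg Subtype.val h)
      have hc1 : c.supp.ncard = 1 := by
        rcases hall c with h1 | h1 <;> rcases hall c' with h2 | h2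
        · exact absurd (h1.trans h2.symm) hcc'
        · rcases hone with h | h
          · rwa [← h1] at h
          · rw [← h2] at h; omega
        · rcases hone with h | h
          · rw [← h2] at h; omega
          · rwa [← h1] at h
        · exact absurd (h1.trans h2.symm) hcc'
      rw [← hsupp, Set.ncard_image_of_injective _ Subtype.val_injective]
      exact hc1
  obtain ⟨v, hv⟩ := Set.ncard_eq_one.mp hsingle
  subst hv
  refine ⟨v, rfl, ?_, ?_⟩
  · intro w hw
    by_contra hwW
    have : w ∈ ({v} : Set V) := hcl v rfl w hwW hw
    · exact G.irrefl (this ▸ hw)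
  · have hsub : G.neighborSet v ⊆ T := by
      intro w hw
      have hwW : w ∈ W := by
        by_contra hwW
        have : w ∈ ({v} : Set V) := hcl v rfl w hwW hw
        exact G.irrefl (this ▸ hw)
      exact ⟨Or.inr ⟨v, rfl, hw⟩, hwW⟩
    exact le_trans (Set.ncard_le_ncard hsub (Set.toFinite _)) hT

lemma exists_comp [Fintype V] (G : SimpleGraph V) (W : Set V) {v : V} (hv : v ∉ W) :
    ∃ S : Set V, IsCompOfComplement G W S ∧ v ∈ S := by
  have hvc : v ∈ Wᶜ := hv
  set c := (G.induce Wᶜ).connectedComponentMk ⟨v, hvc⟩ with hcdef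
  set S : Set V := Subtype.val '' c.supp with hSdef
  have hvS : v ∈ S := ⟨⟨v, hvc⟩, SimpleGraph.ConnectedComponent.mem_supp_iff _ _ |>.mpr rfl, rfl⟩
  have hSW : S ⊆ Wᶜ := by rintro u ⟨⟨u, hu⟩, _, rfl⟩; exact hu
  have hcl : ∀ u ∈ S, ∀ w ∈ Wᶜ, G.Adj u w → w ∈ S := by
    rintro u ⟨⟨u, hu⟩, hmem, rfl⟩ w hw hadj
    refine ⟨⟨w, hw⟩, ?_, rfl⟩
    rw [SimpleGraph.ConnectedComponent.mem_supp_iff]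
    rw [SimpleGraph.ConnectedComponent.mem_supp_iff] at hmem
    rw [← hmem, SimpleGraph.ConnectedComponent.eq]
    exact SimpleGraph.Adj.reachable (by exact hadj.symm : (G.induce Wᶜ).Adj ⟨w, hw⟩ ⟨u, hu⟩)
  refine ⟨S, ⟨⟨v, hvS⟩, Set.disjoint_left.mpr fun a ha => hSW ha, ?_, fun u hu w hw hadj => hcl u hu w hw hadj⟩, hvS⟩
  rw [SimpleGraph.connected_iff]
  refine ⟨?_, ⟨⟨v, hvS⟩⟩⟩
  intro x y
  obtain ⟨⟨x', hx'⟩, hxm, hxv⟩ := x.2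
  obtain ⟨⟨y', hy'⟩, hym, hyv⟩ := y.2
  rw [SimpleGraph.ConnectedComponent.mem_supp_iff] at hxm hym
  have hreach : (G.induce Wᶜ).Reachable ⟨x', hx'⟩ ⟨y', hy'⟩ := by
    rw [← SimpleGraph.ConnectedComponent.eq, hxm, hym]
  obtain ⟨p⟩ := hreach
  have := walk_reach hcl p (hxv ▸ x.2 : (⟨x', hx'⟩ : ↥Wᶜ).val ∈ S) (hyv ▸ y.2)
  convert this using 2 <;> [exact hxv.symm; exact hyv.symm]

end Aux

section Aux2
variable {V : Type} (G : SimpleGraph V)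

lemma bridge_verts (v : V) :
    (bridgeOf G {v}).verts = insert v (G.neighborSet v) := by
  ext w
  simp only [bridgeOf, Set.mem_union, Set.mem_singleton_iff, Set.mem_setOf_eq,
    Set.mem_insert_iff, SimpleGraph.mem_neighborSet]
  constructor
  · rintro (h | ⟨u, rfl, h⟩)
    · exact Or.inl h
    · exact Or.inr h
  · rintro (h | h)
    · exact Or.inl h
    · exact Or.inr ⟨v, rfl, h⟩

lemma k13_iso [Fintype V] (v : V) (h3 : (G.neighborSet v).ncard = 3) :
    Nonempty ((bridgeOf G ({v} : Set V)).coe ≃g completeBipartiteGraph (Fin 1) (Fin 3)) := by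
  have hvN : v ∉ G.neighborSet v := fun h => G.irrefl h
  haveI : Fintype ↥(G.neighborSet v) := (Set.toFinite (G.neighborSet v)).fintype
  have hcard : Fintype.card ↥(G.neighborSet v) = 3 := by
    rw [← Nat.card_eq_fintype_card, Nat.card_coe_set_eq, h3]
  have e₃ := Fintype.equivFinOfCardEq hcard
  have hmem : ∀ x : V, x ∈ (bridgeOf G ({v} : Set V)).verts → x ≠ v →
      x ∈ G.neighborSet v := by
    intro x hx hxv
    rw [bridge_verts] at hx
    rcases hx with h | h
    · exact absurd h hxv
    · exact h
  refine ⟨⟨⟨fun x => if h : x.val = v then Sum.inl 0 else Sum.inr (e₃ ⟨x.val, hmem x.val x.2 h⟩),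
    fun s => Sum.rec (fun _ => ⟨v, Or.inl rfl⟩)
      (fun i => ⟨(e₃.symm i).val, Or.inr ⟨v, rfl, (e₃.symm i).2⟩⟩) s, ?_, ?_⟩, ?_⟩⟩
  · intro x
    by_cases h : x.val = v
    · simp only [dif_pos h]
      exact Subtype.ext h.symm
    · simp only [dif_neg h]
      apply Subtype.ext
      simp
  · rintro (i | i)
    · simp only [dif_pos]
      exact congrArg Sum.inl (Subsingleton.elim _ _)
    · have hne : (e₃.symm i).val ≠ v := by
        intro h
        have h2 := (e₃.symm i).2
        rw [h] at h2
        exact hvN h2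
      simp only [dif_neg hne]
      congr 1
      have : (⟨(e₃.symm i).val, hmem (e₃.symm i).val (Or.inr ⟨v, rfl, (e₃.symm i).2⟩) hne⟩ :
          ↥(G.neighborSet v)) = e₃.symm i := Subtype.ext rfl
      rw [this, Equiv.apply_symm_apply]
  · intro a b
    have hAdj : ∀ x y : V, (bridgeOf G ({v} : Set V)).Adj x y ↔
        G.Adj x y ∧ (x = v ∨ y = v) := fun x y => Iff.rfl
    simp only [Equiv.coe_fn_mk, SimpleGraph.Subgraph.coe_adj, hAdj]
    by_cases ha : a.val = v <;> by_cases hb : b.val = v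
    · rw [dif_pos ha, dif_pos hb]
      refine iff_of_false (by simp [completeBipartiteGraph]) ?_
      rintro ⟨hadj, _⟩
      rw [ha, hb] at hadj
      exact G.irrefl hadj
    · rw [dif_pos ha, dif_neg hb]
      refine iff_of_true (by simp [completeBipartiteGraph]) ?_
      exact ⟨by rw [ha]; exact hmem b.val b.2 hb, Or.inl ha⟩
    · rw [dif_neg ha, dif_pos hb]
      refine iff_of_true (by simp [completeBipartiteGraph]) ?_
      exact ⟨by rw [hb]; exact (hmem a.val a.2 ha).symm, Or.inr hb⟩
    · rw [dif_neg ha, dif_neg hb]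
      refine iff_of_false (by simp [completeBipartiteGraph]) ?_
      rintro ⟨_, h | h⟩
      · exact ha h
      · exact hb h

end Aux2

/-- Let `G` be an essentially 4-connected graph and let `Q` be a cycle in `G` with
`|V(Q)| ≥ 5` such that every `Q`-bridge of `G` has at most three attachments.  Then
every component of `G − V(Q)` consists of a single vertex whose degree in `G` is at
most 3.  If, in addition, every vertex of `G` has degree at least 3, then every
`Q`-bridge of `G` with at least 3 vertices is isomorphic to `K_{1,3}`, and
`|V(Q)| = |V(G)| − b_G(Q)`. -/
theorem bridges_of_tutte_cycle_in_essentially_four_connected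
    {V : Type} [Fintype V] [DecidableEq V] (G : SimpleGraph V)
    (hess : EssFourConnected G)
    {r : V} (Q : G.Walk r r) (hQ : Q.IsCycle)
    (hQ5 : 5 ≤ {v : V | v ∈ Q.support}.ncard)
    (hatt : ∀ B : G.Subgraph, IsBridge G Q.toSubgraph B →
      (B.verts ∩ Q.toSubgraph.verts).ncard ≤ 3) :
    (∀ S : Set V, IsCompOfComplement G {v : V | v ∈ Q.support} S →
      ∃ v : V, S = {v} ∧ (G.neighborSet v).ncard ≤ 3) ∧
    ((∀ v : V, 3 ≤ (G.neighborSet v).ncard) →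
      (∀ B : G.Subgraph, IsBridge G Q.toSubgraph B → 3 ≤ B.verts.ncard →
        Nonempty (B.coe ≃g completeBipartiteGraph (Fin 1) (Fin 3))) ∧
      {v : V | v ∈ Q.support}.ncard = Fintype.card V - numBigBridges G Q.toSubgraph) := by
  classical
  set W : Set V := {v : V | v ∈ Q.support} with hWdef
  have hWverts : Q.toSubgraph.verts = W := Q.verts_toSubgraph
  have hatt3 : ∀ S : Set V, IsCompOfComplement G W S →
      ((bridgeOf G S).verts ∩ W).ncard ≤ 3 := by
    intro S hS
    have hB : IsBridge G Q.toSubgraph (bridgeOf G S) :=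
      Or.inr ⟨S, by rw [hWverts]; exact hS, rfl⟩
    have := hatt _ hB
    rwa [hWverts] at this
  have main : ∀ {S : Set V}, IsCompOfComplement G W S →
      ∃ v : V, S = {v} ∧ G.neighborSet v ⊆ W ∧ (G.neighborSet v).ncard ≤ 3 :=
    fun {S} hS => comp_singleton hess hQ5 hatt3 hS
  constructor
  · intro S hS
    obtain ⟨v, rfl, hNW, hN3⟩ := main hS
    exact ⟨v, rfl, hN3⟩
  · intro hdeg
    have key : ∀ v : V, v ∉ W → IsCompOfComplement G W {v} ∧ G.neighborSet v ⊆ W ∧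
        (G.neighborSet v).ncard = 3 := by
      intro v hv
      obtain ⟨S, hS, hvS⟩ := exists_comp G W hv
      obtain ⟨v', hv', hNW, hN3⟩ := main hS
      rw [hv', Set.mem_singleton_iff] at hvS
      subst hvS
      rw [hv'] at hS
      exact ⟨hS, hNW, le_antisymm hN3 (hdeg v)⟩
    have hbig : {B : G.Subgraph | IsBridge G Q.toSubgraph B ∧ 3 ≤ B.verts.ncard}
        = (fun v => bridgeOf G ({v} : Set V)) '' Wᶜ := by
      ext B
      simp only [Set.mem_setOf_eq, Set.mem_image, Set.mem_compl_iff]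
      constructor
      · rintro ⟨hB, hB3⟩
        rcases hB with ⟨u, w, h, _, _, _, hBe⟩ | ⟨S, hS, hBe⟩
        · exfalso
          rw [hBe, SimpleGraph.subgraphOfAdj_verts] at hB3
          have : ({u, w} : Set V).ncard ≤ 2 := by
            refine le_trans (Set.ncard_insert_le _ _) ?_
            simp
          omega
        · rw [hWverts] at hS
          obtain ⟨v, hv, _, _⟩ := main hS
          refine ⟨v, ?_, by rw [hBe, hv]⟩
          have hvS : v ∈ S := by rw [hv]; exact rfl
          exact fun hvW => Set.disjoint_left.mp hS.2.1 hvS hvW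
      · rintro ⟨v, hv, rfl⟩
        obtain ⟨hcomp, hNW, hN3⟩ := key v hv
        refine ⟨Or.inr ⟨{v}, by rw [hWverts]; exact hcomp, rfl⟩, ?_⟩
        rw [bridge_verts]
        have hni : v ∉ G.neighborSet v := fun h => G.irrefl h
        rw [Set.ncard_insert_of_notMem hni (Set.toFinite _), hN3]
        omega
    refine ⟨?_, ?_⟩
    · intro B hB hB3
      have hmemB : B ∈ (fun v => bridgeOf G ({v} : Set V)) '' Wᶜ := by
        rw [← hbig]; exact ⟨hB, hB3⟩
      obtain ⟨v, hv, hBe⟩ := hmemB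
      rw [← hBe]
      exact k13_iso G v (key v hv).2.2
    · have hinj : Set.InjOn (fun v => bridgeOf G ({v} : Set V)) Wᶜ := by
        intro a ha b hb hab
        simp only at hab
        have hmem : a ∈ insert b (G.neighborSet b) := by
          rw [← bridge_verts, ← hab, bridge_verts]
          exact Set.mem_insert _ _
        rcases hmem with h | h
        · exact h
        · exact absurd ((key b hb).2.1 h) ha
      have hcount : numBigBridges G Q.toSubgraph = Wᶜ.ncard := by
        rw [numBigBridges, hbig, Set.ncard_image_of_injOn hinj]
      have h1 : W.ncard + Wᶜ.ncard = Fintype.card V := by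
        rw [Set.ncard_add_ncard_compl, Nat.card_eq_fintype_card]
      rw [hcount]
      omega

end Paper
end

section
/- Let (G,C) be a circuit graph and let (G₁,G₂) be a 2-separation of G with V(G₁ ∩ G₂) = {x,y} ⊆ V(C) such that xCy ⊆ G₁ and yCx ⊆ G₂. For i = 1,2 let G_i' = G_i + xy (adding the edge xy if it is not already present), drawn as a plane graph with outer cycle C₁ = xCy + yx for i = 1 and C₂ = yCx + xy for i = 2. Then (G₁',C₁) and (G₂',C₂) are circuit graphs. -/
open scoped Classical

namespace Paper


open Topology

lemma IsArc.left_mem {A : Set (ℝ × ℝ)} {a b : ℝ × ℝ} (h : IsArc A a b) : a ∈ A := by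
  obtain ⟨f, -, -, him, h0, -⟩ := h
  rw [← him, ← h0]
  exact Set.mem_image_of_mem f (by constructor <;> norm_num)

lemma IsArc.right_mem {A : Set (ℝ × ℝ)} {a b : ℝ × ℝ} (h : IsArc A a b) : b ∈ A := by
  obtain ⟨f, -, -, him, -, h1⟩ := h
  rw [← him, ← h1]
  exact Set.mem_image_of_mem f (by constructor <;> norm_num)

lemma IsArc.isClosed {A : Set (ℝ × ℝ)} {a b : ℝ × ℝ} (h : IsArc A a b) : IsClosed A := by
  obtain ⟨f, hc, -, him, -, -⟩ := h
  rw [← him]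
  exact (isCompact_Icc.image_of_continuousOn hc).isClosed

lemma IsArc.symm {A : Set (ℝ × ℝ)} {a b : ℝ × ℝ} (h : IsArc A a b) : IsArc A b a := by
  obtain ⟨f, hc, hi, him, h0, h1⟩ := h
  have hmaps : ∀ t ∈ Set.Icc (0:ℝ) 1, 1 - t ∈ Set.Icc (0:ℝ) 1 := by
    rintro t ⟨ht0, ht1⟩; constructor <;> linarith
  refine ⟨fun t => f (1 - t), ?_, ?_, ?_, by simpa using h1, by simpa using h0⟩
  · exact hc.comp ((continuous_const.sub continuous_id).continuousOn) hmaps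
  · intro s hs t ht he
    have := hi (hmaps s hs) (hmaps t ht) he
    linarith [this]
  · have : (fun t : ℝ => 1 - t) '' Set.Icc 0 1 = Set.Icc 0 1 := by
      ext t
      constructor
      · rintro ⟨s, ⟨hs0, hs1⟩, rfl⟩; constructor <;> simp <;> linarith
      · rintro ⟨ht0, ht1⟩; exact ⟨1 - t, ⟨by linarith, by linarith⟩, by ring⟩
    calc (fun t : ℝ => f (1 - t)) '' Set.Icc 0 1
        = f '' ((fun t : ℝ => 1 - t) '' Set.Icc 0 1) := by rw [← Set.image_comp]; rfl
      _ = A := by rw [this, him]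

lemma continuousOn_union_of_isClosed {f : ℝ → ℝ × ℝ} {s t : Set ℝ} (hs : IsClosed s)
    (ht : IsClosed t) (h1 : ContinuousOn f s) (h2 : ContinuousOn f t) :
    ContinuousOn f (s ∪ t) := by
  intro a ha
  have key : ∀ (u : Set ℝ), IsClosed u → ContinuousOn f u → ContinuousWithinAt f u a := by
    intro u hu hcu
    by_cases hau : a ∈ u
    · exact hcu a hau
    · have : 𝓝[u] a = ⊥ := by
        rw [← Filter.empty_mem_iff_bot]
        have : uᶜ ∈ 𝓝 a := hu.isOpen_compl.mem_nhds hau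
        refine Filter.mem_of_superset (Filter.inter_mem (nhdsWithin_le_nhds this) self_mem_nhdsWithin) ?_
        intro x ⟨hx1, hx2⟩; exact hx1 hx2
      rw [ContinuousWithinAt, this]
      exact Filter.tendsto_bot
  have := (key s hs h1).union (key t ht h2)
  exact this

lemma isArc_union {A B : Set (ℝ × ℝ)} {a b c : ℝ × ℝ} (hA : IsArc A a b) (hB : IsArc B b c)
    (hAB : A ∩ B = {b}) : IsArc (A ∪ B) a c := by
  obtain ⟨f, fc, fi, fim, f0, f1⟩ := hA
  obtain ⟨g, gc, gi, gim, g0, g1⟩ := hB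
  set F : ℝ → ℝ × ℝ := fun t => if t ≤ 1/2 then f (2*t) else g (2*t - 1) with hF
  have hmemA : ∀ t : ℝ, t ∈ Set.Icc (0:ℝ) (1/2) → (2*t) ∈ Set.Icc (0:ℝ) 1 := by
    rintro t ⟨h0, h1⟩; constructor <;> linarith
  have hmemB : ∀ t : ℝ, t ∈ Set.Icc (1/2 : ℝ) 1 → (2*t - 1) ∈ Set.Icc (0:ℝ) 1 := by
    rintro t ⟨h0, h1⟩; constructor <;> linarith
  have hFA : ∀ t ∈ Set.Icc (0:ℝ) (1/2), F t = f (2*t) := by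
    rintro t ⟨-, h⟩; rw [hF]; exact if_pos h
  have hFB : ∀ t ∈ Set.Icc (1/2:ℝ) 1, F t = g (2*t - 1) := by
    rintro t ⟨h, -⟩
    rcases lt_or_eq_of_le h with h' | h'
    · exact if_neg (not_le.mpr h')
    · have ht : t = 1/2 := h'.symm
      subst ht
      rw [show F ((1:ℝ)/2) = f (2 * (1/2)) from if_pos le_rfl,
        show (2 * ((1:ℝ)/2)) = 1 by norm_num, show ((1:ℝ) - 1) = 0 by ring, f1, g0]
  have hicc : Set.Icc (0:ℝ) 1 = Set.Icc (0:ℝ) (1/2) ∪ Set.Icc (1/2:ℝ) 1 :=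
    (Set.Icc_union_Icc_eq_Icc (by norm_num) (by norm_num)).symm
  refine ⟨F, ?_, ?_, ?_, ?_, ?_⟩
  · rw [hicc]
    refine continuousOn_union_of_isClosed isClosed_Icc isClosed_Icc ?_ ?_
    · refine ContinuousOn.congr ?_ hFA
      exact fc.comp ((continuous_const.mul continuous_id).continuousOn) hmemA
    · refine ContinuousOn.congr ?_ hFB
      exact gc.comp (((continuous_const.mul continuous_id).sub continuous_const).continuousOn) hmemB
  · rw [hicc]
    intro s hs t ht he
    have hsym : ∀ s t : ℝ, s ∈ Set.Icc (0:ℝ) (1/2) → t ∈ Set.Icc (1/2:ℝ) 1 → F s = F t → s = t := by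
      rintro s t hs ht he
      have h1 : F s ∈ A := by rw [hFA s hs, ← fim]; exact Set.mem_image_of_mem f (hmemA s hs)
      have h2 : F t ∈ B := by rw [hFB t ht, ← gim]; exact Set.mem_image_of_mem g (hmemB t ht)
      have hFt : F t = b := by
        have : F t ∈ A ∩ B := ⟨he ▸ h1, h2⟩
        rwa [hAB] at this
      have hFs : F s = b := he.trans hFt
      have hs' : 2*s = 1 := by
        have : f (2*s) = f 1 := by rw [← hFA s hs, hFs, ← f1]
        exact fi (hmemA s hs) (by constructor <;> norm_num) this
      have ht' : 2*t - 1 = 0 := by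
        have : g (2*t-1) = g 0 := by rw [← hFB t ht, hFt, ← g0]
        exact gi (hmemB t ht) (by constructor <;> norm_num) this
      linarith
    rcases hs with hs | hs <;> rcases ht with ht | ht
    · have := fi (hmemA s hs) (hmemA t ht) (by rw [← hFA s hs, ← hFA t ht, he]); linarith
    · exact hsym s t hs ht he
    · exact (hsym t s ht hs he.symm).symm
    · have := gi (hmemB s hs) (hmemB t ht) (by rw [← hFB s hs, ← hFB t ht, he]); linarith
  · rw [hicc, Set.image_union]
    have e1 : F '' Set.Icc 0 (1/2) = A := by
      rw [Set.image_congr hFA]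
      have : (fun t : ℝ => f (2*t)) '' Set.Icc 0 (1/2) = f '' ((fun t : ℝ => 2*t) '' Set.Icc 0 (1/2)) := by
        rw [← Set.image_comp]; rfl
      rw [this]
      have h2 : (fun t : ℝ => 2*t) '' Set.Icc 0 (1/2) = Set.Icc 0 1 := by
        ext u; constructor
        · rintro ⟨s, ⟨h0, h1⟩, rfl⟩; constructor <;> simp <;> linarith
        · rintro ⟨h0, h1⟩; exact ⟨u/2, ⟨by linarith, by linarith⟩, by ring⟩
      rw [h2, fim]
    have e2 : F '' Set.Icc (1/2) 1 = B := by
      rw [Set.image_congr hFB]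
      have : (fun t : ℝ => g (2*t - 1)) '' Set.Icc (1/2) 1 = g '' ((fun t : ℝ => 2*t - 1) '' Set.Icc (1/2) 1) := by
        rw [← Set.image_comp]; rfl
      rw [this]
      have h2 : (fun t : ℝ => 2*t - 1) '' Set.Icc (1/2) 1 = Set.Icc 0 1 := by
        ext u; constructor
        · rintro ⟨s, ⟨h0, h1⟩, rfl⟩; constructor <;> simp <;> linarith
        · rintro ⟨h0, h1⟩; exact ⟨(u+1)/2, ⟨by linarith, by linarith⟩, by ring⟩
      rw [h2, gim]
    rw [e1, e2]
  · rw [show F 0 = f (2 * 0) from if_pos (by norm_num : (0:ℝ) ≤ 1/2),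
      show (2 * (0:ℝ)) = 0 by ring, f0]
  · rw [show F 1 = g (2 * 1 - 1) from if_neg (by norm_num : ¬ (1:ℝ) ≤ 1/2),
      show (2 * (1:ℝ) - 1) = 1 by ring, g1]

lemma isArc_chain (p : ℕ → ℝ × ℝ) (B : ℕ → Set (ℝ × ℝ)) (N : ℕ)
    (hB : ∀ k, k < N → IsArc (B k) (p k) (p (k+1)))
    (hmeet : ∀ k l, k < l → l < N → B k ∩ B l ⊆ if l = k + 1 then {p l} else ∅) :
    ∀ n, 0 < n → n ≤ N → IsArc (⋃ k ∈ Finset.range n, B k) (p 0) (p n) := by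
  intro n
  induction n with
  | zero => omega
  | succ n ih =>
    intro _ hn
    rcases Nat.eq_zero_or_pos n with rfl | hn0
    · simpa using hB 0 (by omega)
    · have hP := ih hn0 (by omega)
      have hBn := hB n (by omega)
      have hkey : (⋃ k ∈ Finset.range n, B k) ∩ B n = {p n} := by
        apply Set.Subset.antisymm
        · rintro z ⟨hz1, hz2⟩
          simp only [Set.mem_iUnion] at hz1
          obtain ⟨k, hk, hzk⟩ := hz1
          simp only [Finset.mem_range] at hk
          have := hmeet k n hk (by omega) ⟨hzk, hz2⟩
          by_cases h : n = k + 1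
          · rwa [if_pos h] at this
          · rw [if_neg h] at this; exact absurd this (Set.notMem_empty z)
        · rintro z rfl
          refine ⟨?_, hBn.left_mem⟩
          have h1 := (hB (n-1) (by omega)).right_mem
          rw [show n - 1 + 1 = n by omega] at h1
          exact Set.mem_biUnion (Finset.mem_range.mpr (by omega)) h1
      have := isArc_union hP hBn hkey
      have heq : (⋃ k ∈ Finset.range (n+1), B k) = (⋃ k ∈ Finset.range n, B k) ∪ B n := by
        rw [Finset.range_add_one]
        simp [Set.biUnion_insert, Set.union_comm]
      rwa [heq]



theorem generic_circuit
    {V : Type} [Fintype V] [DecidableEq V] (G : SimpleGraph V)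
    {m : ℕ} (C : OrientedCycle G m) (hGC : IsCircuitGraph G C)
    (H : G.Subgraph) (x y : V) (hne : x ≠ y)
    (hxH : x ∈ H.verts) (hyH : y ∈ H.verts)
    (hstar : ∀ u v : V, u ∈ H.verts → u ≠ x → u ≠ y → G.Adj u v → H.Adj u v)
    {m' : ℕ} (H' : SimpleGraph H.verts)
    (hH'def : H' = H.coe ⊔ SimpleGraph.fromEdgeSet
        {e : Sym2 H.verts | Sym2.map Subtype.val e = s(x, y)})
    (C' : OrientedCycle H' m')
    (hdag : ∀ j : ZMod m, C.f j ∈ H.verts → ∃ i : ZMod m', ((C'.f i : V)) = C.f j)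
    (hx' : ∃ i : ZMod m', ((C'.f i : V)) = x)
    (hy' : ∃ i : ZMod m', ((C'.f i : V)) = y)
    (E : PlaneEmbedding G) (hCE : C.IsOuterCycleOf E)
    (A : Set (ℝ × ℝ)) (hA : IsArc A (E.vmap x) (E.vmap y))
    (hA1 : ∀ e ∈ H.edgeSet, A ∩ E.arc e ⊆
      {p | ∃ w : V, (w = x ∨ w = y) ∧ w ∈ e ∧ p = E.vmap w})
    (hA2 : ∀ w : V, w ∈ H.verts → E.vmap w ∈ A → w = x ∨ w = y)
    (hAsub : A ⊆ ⋃ e ∈ G.edgeSet, E.arc e)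
    (hcov : (⋃ i : ZMod m', (if s(((C'.f i : V)), ((C'.f (i+1) : V))) = s(x,y) then A
        else E.arc s((C'.f i : V), (C'.f (i+1) : V))))
      = ⋃ i : ZMod m, E.arc s(C.f i, C.f (i + 1))) :
    IsCircuitGraph H' C' := by
  have hm3 : 3 ≤ m := C.three_le
  have hm3' : 3 ≤ m' := C'.three_le
  have hH'adj : ∀ u v : H.verts, H'.Adj u v ↔
      (H.Adj u.val v.val ∨ (s((u:V), (v:V)) = s(x,y) ∧ u ≠ v)) := by
    intro u v
    rw [hH'def, SimpleGraph.sup_adj, SimpleGraph.fromEdgeSet_adj]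
    constructor
    · rintro (h | ⟨h1, h2⟩)
      · exact Or.inl h
      · refine Or.inr ⟨?_, h2⟩
        simpa [Sym2.map_pair_eq] using h1
    · rintro (h | ⟨h1, h2⟩)
      · exact Or.inl h
      · refine Or.inr ⟨?_, h2⟩
        simpa [Sym2.map_pair_eq] using h1
  have hH'adj_of_H : ∀ {u v : H.verts}, H.Adj u.val v.val → H'.Adj u v := by
    intro u v h
    exact (hH'adj u v).mpr (Or.inl h)
  have hH'edge : ∀ {u v : H.verts}, H'.Adj u v → ¬ (s((u:V),(v:V)) = s(x,y)) →
      H.Adj u.val v.val := by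
    intro u v h hne'
    rcases (hH'adj u v).mp h with h | ⟨h1, -⟩
    · exact h
    · exact absurd h1 hne'
  -- Part 1 : 2-connectivity
  have hconn2 : IsKConnected 2 H' := by
    constructor
    · have : NeZero m' := ⟨by omega⟩
      have h1 : Fintype.card (ZMod m') ≤ Fintype.card H.verts :=
        Fintype.card_le_of_injective C'.f C'.inj
      rw [ZMod.card] at h1
      omega
    · intro S hS
      set S₀ : Set V := Subtype.val '' S with hS₀def
      have hS₀card : S₀.ncard < 2 := by
        rw [hS₀def, Set.ncard_image_of_injective _ Subtype.val_injective]; exact hS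
      have hGconn := hGC.1.2 S₀ hS₀card
      have hmemS₀ : ∀ (w : H.verts), w ∉ S → (w : V) ∉ S₀ := by
        intro w hw hmem
        obtain ⟨u, hu, huv⟩ := hmem
        exact hw (by rwa [show u = w from Subtype.ext huv] at hu)
      have hnotboth : ¬ ((⟨x,hxH⟩ : H.verts) ∈ S ∧ (⟨y,hyH⟩ : H.verts) ∈ S) := by
        rintro ⟨h1, h2⟩
        have hsub : ({⟨x,hxH⟩, ⟨y,hyH⟩} : Set H.verts) ⊆ S := by
          rintro z (rfl | rfl) <;> assumption
        have h3 := Set.ncard_le_ncard hsub S.toFinite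
        rw [Set.ncard_pair (by simp [Subtype.ext_iff]; exact hne)] at h3
        omega
      obtain ⟨t, htH, htS, htxy⟩ : ∃ (t : V) (htH : t ∈ H.verts),
          (⟨t, htH⟩ : H.verts) ∉ S ∧ (t = x ∨ t = y) := by
        by_cases hx0 : (⟨x,hxH⟩ : H.verts) ∈ S
        · exact ⟨y, hyH, fun h => hnotboth ⟨hx0, h⟩, Or.inr rfl⟩
        · exact ⟨x, hxH, hx0, Or.inl rfl⟩
      have htS₀ : t ∉ S₀ := hmemS₀ ⟨t, htH⟩ htS
      have hliftmem : ∀ (v : V) (hv : v ∈ H.verts), v ∉ S₀ → (⟨v,hv⟩ : H.verts) ∈ Sᶜ := by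
        intro v hv h hmem
        exact h ⟨⟨v,hv⟩, hmem, rfl⟩
      -- reachability claim
      have reach : ∀ (a b : ↥(S₀ᶜ)) (W : (G.induce S₀ᶜ).Walk a b)
          (ha : (a : V) ∈ H.verts) (hb : (b : V) = t),
          ∃ z : ↥(Sᶜ), (((z : H.verts) : V) = x ∨ ((z : H.verts) : V) = y) ∧
            (H'.induce Sᶜ).Reachable ⟨⟨(a : V), ha⟩, hliftmem _ ha a.2⟩ z := by
        intro a b W
        induction W with
        | @nil a =>
          intro ha hb
          subst hb
          refine ⟨⟨⟨(a : V), ha⟩, hliftmem _ ha a.2⟩, ?_, SimpleGraph.Reachable.refl _⟩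
          rcases htxy with h | h
          · exact Or.inl h
          · exact Or.inr h
        | @cons a b c h W ih =>
          intro ha hb
          by_cases hax : (a : V) = x ∨ (a : V) = y
          · exact ⟨⟨⟨(a : V), ha⟩, hliftmem _ ha a.2⟩, hax, SimpleGraph.Reachable.refl _⟩
          · push_neg at hax
            have hGadj : G.Adj (a : V) (b : V) := h
            have hHadj := hstar (a : V) (b : V) ha hax.1 hax.2 hGadj
            have hb2 : (b : V) ∈ H.verts := H.edge_vert hHadj.symm
            obtain ⟨z, hz1, hz2⟩ := ih hb2 hb
            refine ⟨z, hz1, SimpleGraph.Reachable.trans (SimpleGraph.Adj.reachable ?_) hz2⟩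
            show H'.Adj ⟨(a : V), ha⟩ ⟨(b : V), hb2⟩
            exact hH'adj_of_H hHadj
      rw [SimpleGraph.connected_iff]
      refine ⟨?_, ⟨⟨⟨t, htH⟩, hliftmem t htH htS₀⟩⟩⟩
      -- helper: every vertex reaches an x-or-y vertex
      have main : ∀ u : ↥(Sᶜ), ∃ z : ↥(Sᶜ),
          (((z : H.verts) : V) = x ∨ ((z : H.verts) : V) = y) ∧
          (H'.induce Sᶜ).Reachable u z := by
        intro u
        have huS : (u : H.verts) ∉ S := u.2
        have huS₀ : ((u : H.verts) : V) ∉ S₀ := hmemS₀ _ huS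
        obtain ⟨W⟩ := hGconn.preconnected ⟨((u : H.verts) : V), huS₀⟩ ⟨t, htS₀⟩
        obtain ⟨z, hz1, hz2⟩ := reach _ _ W (u : H.verts).2 rfl
        refine ⟨z, hz1, ?_⟩
        have : (⟨⟨((u : H.verts) : V), (u : H.verts).2⟩, _⟩ : ↥(Sᶜ)) = u :=
          Subtype.ext (Subtype.ext rfl)
        rwa [this] at hz2
      intro u v
      obtain ⟨zu, hzu1, hzu2⟩ := main u
      obtain ⟨zv, hzv1, hzv2⟩ := main v
      refine hzu2.trans (SimpleGraph.Reachable.trans ?_ hzv2.symm)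
      by_cases hzz : zu = zv
      · rw [hzz]
      · refine SimpleGraph.Adj.reachable ?_
        show H'.Adj (zu : H.verts) (zv : H.verts)
        have hvalne : ((zu : H.verts) : V) ≠ ((zv : H.verts) : V) := by
          intro hvv
          exact hzz (Subtype.ext (Subtype.ext hvv))
        refine (hH'adj _ _).mpr (Or.inr ⟨?_, fun hc => hvalne (by rw [hc])⟩)
        rcases hzu1 with h1 | h1 <;> rcases hzv1 with h2 | h2
        · exact absurd (h1.trans h2.symm) hvalne
        · rw [h1, h2]
        · rw [h1, h2]; exact Sym2.eq_swap
        · exact absurd (h1.trans h2.symm) hvalne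
  -- Part 2 : plane embedding
  have hembed : ∃ E' : PlaneEmbedding H', C'.IsOuterCycleOf E' := by
    classical
    have hmapinj : Function.Injective (Sym2.map (Subtype.val : H.verts → V)) :=
      Sym2.map.injective Subtype.val_injective
    set arc' : Sym2 H.verts → Set (ℝ × ℝ) := fun e =>
      if Sym2.map Subtype.val e = s(x,y) then A else E.arc (Sym2.map Subtype.val e)
      with harc'def
    have harc'pair : ∀ u v : H.verts, arc' s(u,v) =
        if s((u:V),(v:V)) = s(x,y) then A else E.arc s((u:V),(v:V)) := by
      intro u v
      rw [harc'def]
      simp only [Sym2.map_pair_eq]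
    -- helper for the mixed arc_meet case
    have hmixed : ∀ u v u' v' : H.verts, H'.Adj u' v' →
        s((u:V),(v:V)) = s(x,y) → ¬ s((u':V),(v':V)) = s(x,y) →
        A ∩ E.arc s((u':V),(v':V)) ⊆
          {p | ∃ w : H.verts, w ∈ s(u,v) ∧ w ∈ s(u',v') ∧ p = E.vmap (w : V)} := by
      intro u v u' v' hadj' hc hc'
      have hHe : s((u':V),(v':V)) ∈ H.edgeSet := by
        rw [SimpleGraph.Subgraph.mem_edgeSet]
        exact hH'edge hadj' hc'
      intro p hp
      obtain ⟨w, hwxy, hwmem, hpw⟩ := hA1 _ hHe hp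
      have hwH : w ∈ H.verts := by
        rcases hwxy with rfl | rfl
        · exact hxH
        · exact hyH
      refine ⟨⟨w, hwH⟩, ?_, ?_, hpw⟩
      · rw [Sym2.mem_iff]
        rcases Sym2.eq_iff.mp hc with ⟨h1, h2⟩ | ⟨h1, h2⟩ <;> rcases hwxy with rfl | rfl
        · exact Or.inl (Subtype.ext h1.symm)
        · exact Or.inr (Subtype.ext h2.symm)
        · exact Or.inr (Subtype.ext h2.symm)
        · exact Or.inl (Subtype.ext h1.symm)
      · rw [Sym2.mem_iff]
        rcases Sym2.mem_iff.mp hwmem with h | h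
        · exact Or.inl (Subtype.ext h)
        · exact Or.inr (Subtype.ext h)
    let E' : PlaneEmbedding H' :=
      { vmap := fun v => E.vmap (v : V)
        vinj := E.vinj.comp Subtype.val_injective
        arc := arc'
        arc_spec := by
          intro u v huv
          rw [harc'pair]
          by_cases hc : s((u:V),(v:V)) = s(x,y)
          · rw [if_pos hc]
            show IsArc A (E.vmap (u:V)) (E.vmap (v:V))
            rcases Sym2.eq_iff.mp hc with ⟨h1, h2⟩ | ⟨h1, h2⟩
            · rw [h1, h2]; exact hA
            · rw [h1, h2]; exact hA.symm
          · rw [if_neg hc]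
            show IsArc (E.arc s((u:V),(v:V))) (E.vmap (u:V)) (E.vmap (v:V))
            exact E.arc_spec _ _ (H.adj_sub (hH'edge huv hc))
        arc_vertex := by
          intro e he w hw
          induction e with
          | h u v =>
            rw [SimpleGraph.mem_edgeSet] at he
            rw [harc'pair] at hw
            by_cases hc : s((u:V),(v:V)) = s(x,y)
            · rw [if_pos hc] at hw
              have hwxy := hA2 (w : V) w.2 hw
              rw [Sym2.mem_iff]
              rcases Sym2.eq_iff.mp hc with ⟨h1, h2⟩ | ⟨h1, h2⟩ <;> rcases hwxy with h | h
              · exact Or.inl (Subtype.ext (h.trans h1.symm))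
              · exact Or.inr (Subtype.ext (h.trans h2.symm))
              · exact Or.inr (Subtype.ext (h.trans h2.symm))
              · exact Or.inl (Subtype.ext (h.trans h1.symm))
            · rw [if_neg hc] at hw
              have hGe : s((u:V),(v:V)) ∈ G.edgeSet := H.adj_sub (hH'edge he hc)
              have := E.arc_vertex _ hGe (w : V) hw
              rw [Sym2.mem_iff] at this ⊢
              rcases this with h | h
              · exact Or.inl (Subtype.ext h)
              · exact Or.inr (Subtype.ext h)
        arc_meet := by
          intro e he e' he' hnee
          induction e with
          | h u v =>
            induction e' with
            | h u' v' =>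
              rw [SimpleGraph.mem_edgeSet] at he he'
              rw [harc'pair, harc'pair]
              by_cases hc : s((u:V),(v:V)) = s(x,y) <;>
                by_cases hc' : s((u':V),(v':V)) = s(x,y)
              · exfalso
                apply hnee
                apply hmapinj
                rw [Sym2.map_pair_eq, Sym2.map_pair_eq, hc, hc']
              · rw [if_pos hc, if_neg hc']
                exact hmixed u v u' v' he' hc hc'
              · rw [if_neg hc, if_pos hc']
                intro p hp
                have hp' : p ∈ A ∩ E.arc s((u:V),(v:V)) := ⟨hp.2, hp.1⟩
                obtain ⟨w, hw1, hw2, hw3⟩ := hmixed u' v' u v he hc' hc hp'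
                exact ⟨w, hw2, hw1, hw3⟩
              · rw [if_neg hc, if_neg hc']
                have hGe : s((u:V),(v:V)) ∈ G.edgeSet := H.adj_sub (hH'edge he hc)
                have hGe' : s((u':V),(v':V)) ∈ G.edgeSet := H.adj_sub (hH'edge he' hc')
                have hmapne : s((u:V),(v:V)) ≠ s((u':V),(v':V)) := by
                  intro hmeq
                  apply hnee
                  apply hmapinj
                  rwa [Sym2.map_pair_eq, Sym2.map_pair_eq]
                intro p hp
                obtain ⟨w, hw1, hw2, hw3⟩ := E.arc_meet _ hGe _ hGe' hmapne hp
                have hwH : w ∈ H.verts := by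
                  rcases Sym2.mem_iff.mp hw1 with h | h
                  · exact h ▸ u.2
                  · exact h ▸ v.2
                refine ⟨⟨w, hwH⟩, ?_, ?_, hw3⟩
                · rw [Sym2.mem_iff]
                  rcases Sym2.mem_iff.mp hw1 with h | h
                  · exact Or.inl (Subtype.ext h)
                  · exact Or.inr (Subtype.ext h)
                · rw [Sym2.mem_iff]
                  rcases Sym2.mem_iff.mp hw2 with h | h
                  · exact Or.inl (Subtype.ext h)
                  · exact Or.inr (Subtype.ext h) }
    -- outer cycle
    obtain ⟨p, hpim, hpunb, hpfr⟩ := hCE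
    have himcl : IsClosed E.image := by
      unfold PlaneEmbedding.image
      apply IsClosed.union
      · exact (Set.finite_range _).isClosed
      · apply Set.Finite.isClosed_biUnion (Set.toFinite _)
        intro e he
        revert he
        induction e with
        | h u v =>
          intro he
          rw [SimpleGraph.mem_edgeSet] at he
          exact (E.arc_spec u v he).isClosed
    have hE'arcsub : ∀ e ∈ H'.edgeSet, E'.arc e ⊆ E.image := by
      intro e he
      revert he
      induction e with
      | h u v =>
        intro he
        rw [SimpleGraph.mem_edgeSet] at he
        show arc' s(u,v) ⊆ E.image
        rw [harc'pair]
        by_cases hc : s((u:V),(v:V)) = s(x,y)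
        · rw [if_pos hc]
          exact hAsub.trans (Set.subset_union_right)
        · rw [if_neg hc]
          intro z hz
          refine Or.inr ?_
          exact Set.mem_biUnion (H.adj_sub (hH'edge he hc)) hz
    have hE'sub : E'.image ⊆ E.image := by
      rintro z (hz | hz)
      · obtain ⟨w, rfl⟩ := hz
        exact Or.inl ⟨(w : V), rfl⟩
      · simp only [Set.mem_iUnion] at hz
        obtain ⟨e, he, hze⟩ := hz
        exact hE'arcsub e he hze
    have harcC' : ∀ i : ZMod m', E'.arc s(C'.f i, C'.f (i+1)) =
        (if s(((C'.f i : V)), ((C'.f (i+1) : V))) = s(x,y) then A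
          else E.arc s((C'.f i : V), (C'.f (i+1) : V))) := by
      intro i
      exact harc'pair _ _
    set D : Set (ℝ × ℝ) := ⋃ i : ZMod m, E.arc s(C.f i, C.f (i + 1)) with hDdef
    have hDeq : (⋃ i : ZMod m', E'.arc s(C'.f i, C'.f (i+1))) = D := by
      rw [← hcov]
      exact Set.iUnion_congr harcC'
    have hDsub : D ⊆ E'.image := by
      rw [← hDeq]
      intro z hz
      simp only [Set.mem_iUnion] at hz
      obtain ⟨i, hi⟩ := hz
      refine Or.inr ?_
      exact Set.mem_biUnion ((SimpleGraph.mem_edgeSet H').mpr (C'.adj i)) hi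
    have hp' : p ∉ E'.image := fun h => hpim (hE'sub h)
    set U : Set (ℝ × ℝ) := connectedComponentIn E.imageᶜ p with hUdef
    set U' : Set (ℝ × ℝ) := connectedComponentIn E'.imageᶜ p with hU'def
    have hUopen : IsOpen U := himcl.isOpen_compl.connectedComponentIn
    have hpU : p ∈ U := mem_connectedComponentIn hpim
    have hpU' : p ∈ U' := mem_connectedComponentIn hp'
    have hUsub : U ⊆ E.imageᶜ := connectedComponentIn_subset _ _
    have hU'sub : U' ⊆ E'.imageᶜ := connectedComponentIn_subset _ _
    have hUsub' : U ⊆ E'.imageᶜ := fun z hz h => (hUsub hz) (hE'sub h)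
    have hUU' : U ⊆ U' :=
      isPreconnected_connectedComponentIn.subset_connectedComponentIn hpU hUsub'
    have hclosU : ∀ z ∈ U', z ∈ closure U → z ∈ U := by
      intro z hz hcl
      by_cases hzU : z ∈ U
      · exact hzU
      · exfalso
        have : z ∈ frontier U := by
          rw [hUopen.frontier_eq]
          exact ⟨hcl, hzU⟩
        rw [hpfr] at this
        exact (hU'sub hz) (hDsub this)
    have hU'U : U' ⊆ U := by
      intro z hz
      have hcover : U' ⊆ U ∪ (closure U)ᶜ := by
        intro w hw
        by_cases hwc : w ∈ closure U
        · exact Or.inl (hclosU w hw hwc)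
        · exact Or.inr hwc
      by_cases h2 : (U' ∩ (closure U)ᶜ).Nonempty
      · exfalso
        obtain ⟨w, -, hw2, hw3⟩ := isPreconnected_connectedComponentIn U (closure U)ᶜ
          hUopen isClosed_closure.isOpen_compl hcover ⟨p, hpU', hpU⟩ h2
        exact hw3 (subset_closure hw2)
      · have : z ∈ closure U := by
          by_contra hc
          exact h2 ⟨z, hz, hc⟩
        exact hclosU z hz this
    have hUeq : U' = U := Set.Subset.antisymm hU'U hUU'
    refine ⟨E', p, hp', ?_, ?_⟩
    · rw [show connectedComponentIn E'.imageᶜ p = U' from rfl, hUeq]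
      exact hpunb
    · rw [show connectedComponentIn E'.imageᶜ p = U' from rfl, hUeq, hpfr]
      exact hDeq.symm
  -- Part 3 : cut condition
  refine ⟨hconn2, hembed, ?_⟩
  intro T hT S hS
  by_contra hcon
  push_neg at hcon
  set S' : Set V := Subtype.val '' S with hS'def
  set T' : Set V := Subtype.val '' T with hT'def
  obtain ⟨hSne, hdisjST, hSconn, hSclose⟩ := hS
  have hCnotS : ∀ j : ZMod m, C.f j ∉ S' := by
    intro j hj
    obtain ⟨u, huS, huv⟩ := hj
    have huH : C.f j ∈ H.verts := huv ▸ u.2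
    obtain ⟨i, hi⟩ := hdag j huH
    have : C'.f i = u := Subtype.ext (by rw [hi, ← huv])
    exact hcon i (this ▸ huS)
  have hxS' : x ∉ S' := by
    intro hx0
    obtain ⟨u, huS, huv⟩ := hx0
    obtain ⟨i, hi⟩ := hx'
    exact hcon i (show C'.f i ∈ S from (Subtype.ext (hi.trans huv.symm) : C'.f i = u) ▸ huS)
  have hyS' : y ∉ S' := by
    intro hy0
    obtain ⟨u, huS, huv⟩ := hy0
    obtain ⟨i, hi⟩ := hy'
    exact hcon i (show C'.f i ∈ S from (Subtype.ext (hi.trans huv.symm) : C'.f i = u) ▸ huS)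
  have hSsub : ∀ u ∈ S', u ∈ H.verts := by
    rintro u ⟨w, hw, rfl⟩; exact w.2
  have hSadj : ∀ u ∈ S', ∀ v, G.Adj u v → H.Adj u v := by
    intro u hu v hadj
    exact hstar u v (hSsub u hu) (fun h => hxS' (h ▸ hu)) (fun h => hyS' (h ▸ hu)) hadj
  have hclose' : ∀ u ∈ S', ∀ v, v ∉ T' → G.Adj u v → v ∈ S' := by
    intro u hu v hvT hadj
    have hH := hSadj u hu v hadj
    have hvH : v ∈ H.verts := H.edge_vert hH.symm
    have hvT2 : (⟨v,hvH⟩ : H.verts) ∉ T := fun h => hvT ⟨_, h, rfl⟩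
    obtain ⟨u', hu'S, rfl⟩ := hu
    have := hSclose u' hu'S ⟨v,hvH⟩ hvT2 ((hH'adj u' ⟨v,hvH⟩).mpr (Or.inl hH))
    exact ⟨_, this, rfl⟩
  have hS'conn : (G.induce S').Connected := by
    let hom : (H'.induce S) →g (G.induce S') :=
      ⟨fun a => ⟨(a : H.verts), ⟨(a : H.verts), a.2, rfl⟩⟩, by
        intro a b hab
        have hab' : H'.Adj (a : H.verts) (b : H.verts) := hab
        rcases (hH'adj _ _).mp hab' with h | ⟨h1, -⟩
        · exact h.adj_sub
        · exfalso
          rcases Sym2.eq_iff.mp h1 with ⟨h2, -⟩ | ⟨h2, -⟩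
          · exact hxS' (h2 ▸ ⟨(a : H.verts), a.2, rfl⟩)
          · exact hyS' (h2 ▸ ⟨(a : H.verts), a.2, rfl⟩)⟩
    have hsurj : Function.Surjective hom := by
      rintro ⟨b, ⟨w, hw, rfl⟩⟩
      exact ⟨⟨w, hw⟩, Subtype.ext rfl⟩
    exact hSconn.map hom hsurj
  have hcomp : IsCompOfComplement G T' S' :=
    ⟨hSne.image _, (Set.disjoint_image_iff Subtype.val_injective).mpr hdisjST, hS'conn, hclose'⟩
  -- construct the 2-separation of G
  let K₁ : G.Subgraph :=
    { verts := S'ᶜ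
      Adj := fun a b => G.Adj a b ∧ a ∉ S' ∧ b ∉ S'
      adj_sub := fun h => h.1
      edge_vert := fun h => h.2.1
      symm := ⟨by rintro a b ⟨h1, h2, h3⟩; exact ⟨h1.symm, h3, h2⟩⟩ }
  let K₂ : G.Subgraph :=
    { verts := S' ∪ T'
      Adj := fun a b => G.Adj a b ∧ (a ∈ S' ∨ b ∈ S')
      adj_sub := fun h => h.1
      edge_vert := by
        rintro a b ⟨h1, h2 | h2⟩
        · exact Or.inl h2
        · by_cases haT : a ∈ T'
          · exact Or.inr haT
          · exact Or.inl (hclose' b h2 a haT h1.symm)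
      symm := ⟨by rintro a b ⟨h1, h2⟩; exact ⟨h1.symm, h2.symm⟩⟩ }
  have hK₁v : K₁.verts = S'ᶜ := rfl
  have hK₂v : K₂.verts = S' ∪ T' := rfl
  have hTdisj : ∀ a ∈ T', a ∉ S' := by
    intro a haT haS
    obtain ⟨u, hu, huv⟩ := haT
    obtain ⟨w, hw, hwv⟩ := haS
    have : w = u := Subtype.ext (hwv.trans huv.symm)
    exact (Set.disjoint_left.mp hdisjST hw) (this ▸ hu)
  have hinter : K₁.verts ∩ K₂.verts = T' := by
    rw [hK₁v, hK₂v]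
    ext a
    simp only [Set.mem_inter_iff, Set.mem_compl_iff, Set.mem_union]
    constructor
    · rintro ⟨h1, h2 | h2⟩
      · exact absurd h2 h1
      · exact h2
    · intro h
      exact ⟨hTdisj a h, Or.inr h⟩
  have hT'card : T'.ncard = 2 := by
    rw [hT'def, Set.ncard_image_of_injective _ Subtype.val_injective]; exact hT.1
  have hwit : ∃ j : ZMod m, C.f j ∉ T' := by
    by_contra hcw
    push_neg at hcw
    have h01 : C.f 0 ≠ C.f 1 := fun h => by
      have := C.inj h
      have h0 : ((0:ℕ) : ZMod m) = ((1:ℕ) : ZMod m) := by exact_mod_cast this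
      have := congrArg ZMod.val h0
      rw [ZMod.val_cast_of_lt (by omega), ZMod.val_cast_of_lt (by omega)] at this
      omega
    have h02 : C.f 0 ≠ C.f 2 := fun h => by
      have := C.inj h
      have h0 : ((0:ℕ) : ZMod m) = ((2:ℕ) : ZMod m) := by exact_mod_cast this
      have := congrArg ZMod.val h0
      rw [ZMod.val_cast_of_lt (by omega), ZMod.val_cast_of_lt (by omega)] at this
      omega
    have h12 : C.f 1 ≠ C.f 2 := fun h => by
      have := C.inj h
      have h0 : ((1:ℕ) : ZMod m) = ((2:ℕ) : ZMod m) := by exact_mod_cast this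
      have := congrArg ZMod.val h0
      rw [ZMod.val_cast_of_lt (by omega), ZMod.val_cast_of_lt (by omega)] at this
      omega
    have hsub : ({C.f 0, C.f 1, C.f 2} : Set V) ⊆ T' := by
      rintro a (rfl | rfl | rfl) <;> apply hcw
    have h3 := Set.ncard_le_ncard hsub (Set.toFinite _)
    rw [hT'card] at h3
    rw [Set.ncard_insert_of_notMem (by simp [h01, h02]) (Set.toFinite _),
      Set.ncard_insert_of_notMem (by simp [h12]) (Set.toFinite _),
      Set.ncard_singleton] at h3
    omega
  obtain ⟨j₀, hj₀⟩ := hwit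
  have hw₀1 : C.f j₀ ∈ K₁.verts := hCnotS j₀
  have hw₀2 : C.f j₀ ∉ K₂.verts := by
    rw [hK₂v]
    rintro (h | h)
    · exact hCnotS j₀ h
    · exact hj₀ h
  obtain ⟨s₀, hs₀⟩ := hSne
  have hs₀' : (s₀ : V) ∈ S' := ⟨s₀, hs₀, rfl⟩
  have hsep' : IsKSeparation G 2 K₁ K₂ := by
    refine ⟨?_, ?_, ?_, ?_, ?_⟩
    · apply SimpleGraph.Subgraph.ext
      · rw [SimpleGraph.Subgraph.verts_sup, SimpleGraph.Subgraph.verts_top, hK₁v, hK₂v]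
        ext a
        by_cases h : a ∈ S' <;> simp [h]
      · ext a b
        rw [SimpleGraph.Subgraph.sup_adj, SimpleGraph.Subgraph.top_adj]
        constructor
        · rintro (⟨h, -⟩ | ⟨h, -⟩) <;> exact h
        · intro h
          by_cases haS : a ∈ S'
          · exact Or.inr ⟨h, Or.inl haS⟩
          · by_cases hbS : b ∈ S'
            · exact Or.inr ⟨h, Or.inr hbS⟩
            · exact Or.inl ⟨h, haS, hbS⟩
    · rw [Set.disjoint_left]
      intro e he1 he2
      induction e with
      | h a b =>
        rw [SimpleGraph.Subgraph.mem_edgeSet] at he1 he2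
        rcases he2.2 with h | h
        · exact he1.2.1 h
        · exact he1.2.2 h
    · rw [hinter]; exact hT'card
    · intro hle
      exact hw₀2 (hle.1 hw₀1)
    · intro hle
      exact (hle.1 (Or.inl hs₀' : (s₀ : V) ∈ K₂.verts)) hs₀'
  have hkcut : IsKCut G 2 T' := by
    refine ⟨hT'card, K₁, K₂, hsep', hinter, ⟨C.f j₀, hw₀1, hw₀2⟩, ⟨(s₀ : V), Or.inl hs₀', ?_⟩⟩
    intro h
    exact h hs₀'
  obtain ⟨j, hj⟩ := hGC.2.2 T' hkcut S' hcomp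
  exact hCnotS j hj



/-- Splitting a circuit graph along a 2-separation.
Let `(G, C)` be a circuit graph and `(G₁, G₂)` a 2-separation of `G` with
`V(G₁ ∩ G₂) = {x, y} ⊆ V(C)`, `xCy ⊆ G₁` and `yCx ⊆ G₂` (normalized along the
clockwise enumeration: `x = C.f 0` and `y = C.f q` with `0 < q < m`; the clockwise
subpath `xCy` uses indices `0, …, q` and `yCx` uses indices `q, …, m`).
Let `G₁' = G₁ + xy` (a graph on the vertex set of `G₁`) and let
`C₁ = xCy + yx` be the corresponding cycle (any oriented cycle on `q + 1` vertices
tracing `C.f 0, …, C.f q`); similarly `G₂' = G₂ + xy` and `C₂ = yCx + xy`.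
Then `(G₁', C₁)` and `(G₂', C₂)` are circuit graphs. -/
theorem circuit_graph_of_two_separation
    {V : Type} [Fintype V] [DecidableEq V] (G : SimpleGraph V)
    {m : ℕ} (C : OrientedCycle G m) (hGC : IsCircuitGraph G C)
    (q : ℕ) (hq0 : 0 < q) (hqm : q < m)
    (G₁ G₂ : G.Subgraph) (hsep : IsKSeparation G 2 G₁ G₂)
    (hxy : G₁.verts ∩ G₂.verts = {C.f 0, C.f (q : ZMod m)})
    (hxCy_v : ∀ k : ℕ, k ≤ q → C.f (k : ZMod m) ∈ G₁.verts)
    (hxCy_e : ∀ k : ℕ, k < q → G₁.Adj (C.f (k : ZMod m)) (C.f ((k : ZMod m) + 1)))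
    (hyCx_v : ∀ k : ℕ, q ≤ k → k ≤ m → C.f (k : ZMod m) ∈ G₂.verts)
    (hyCx_e : ∀ k : ℕ, q ≤ k → k < m →
      G₂.Adj (C.f (k : ZMod m)) (C.f ((k : ZMod m) + 1))) :
    (∀ C₁ : OrientedCycle
        (G₁.coe ⊔ SimpleGraph.fromEdgeSet
          {e : Sym2 G₁.verts |
            Sym2.map (Subtype.val) e = s(C.f 0, C.f (q : ZMod m))}) (q + 1),
      (∀ i : ZMod (q + 1), ((C₁.f i : V) = C.f ((i.val : ℕ) : ZMod m))) →
      IsCircuitGraph _ C₁) ∧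
    (∀ C₂ : OrientedCycle
        (G₂.coe ⊔ SimpleGraph.fromEdgeSet
          {e : Sym2 G₂.verts |
            Sym2.map (Subtype.val) e = s(C.f (q : ZMod m), C.f 0)}) (m - q + 1),
      (∀ i : ZMod (m - q + 1), ((C₂.f i : V) = C.f ((q + i.val : ℕ) : ZMod m))) →
      IsCircuitGraph _ C₂) := by
  obtain ⟨E, hCE⟩ := hGC.2.1
  have hm3 : 3 ≤ m := C.three_le
  haveI : NeZero m := ⟨by omega⟩
  set cf : ℕ → V := fun a => C.f ((a : ℕ) : ZMod m) with hcf
  have hcf0 : cf 0 = C.f 0 := by rw [hcf]; simp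
  have hcf_succ : ∀ a : ℕ, cf (a+1) = C.f (((a:ℕ) : ZMod m) + 1) := by
    intro a; rw [hcf]; simp only; push_cast; ring_nf
  have hadj : ∀ a : ℕ, G.Adj (cf a) (cf (a+1)) := by
    intro a; rw [hcf_succ]; exact C.adj _
  have hedge : ∀ a : ℕ, s(cf a, cf (a+1)) ∈ G.edgeSet := fun a =>
    (SimpleGraph.mem_edgeSet G).mpr (hadj a)
  have hCmod : ∀ a b : ℕ, cf a = cf b → a % m = b % m := by
    intro a b h
    have h2 := C.inj h
    have h3 := congrArg ZMod.val h2
    rwa [ZMod.val_natCast, ZMod.val_natCast] at h3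
  have hCne : ∀ a b : ℕ, a < m → b < m → a ≠ b → cf a ≠ cf b := by
    intro a b ha hb hne' h
    have := hCmod a b h
    rw [Nat.mod_eq_of_lt ha, Nat.mod_eq_of_lt hb] at this
    exact hne' this
  have hcfm : cf m = cf 0 := by rw [hcf]; simp
  have hx1 : C.f 0 ∈ G₁.verts := by
    have := hxCy_v 0 (by omega); rwa [Nat.cast_zero] at this
  have hy1 : C.f ((q:ℕ) : ZMod m) ∈ G₁.verts := hxCy_v q le_rfl
  have hx2 : C.f 0 ∈ G₂.verts := by
    have := hyCx_v m (by omega) le_rfl; rwa [ZMod.natCast_self] at this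
  have hy2 : C.f ((q:ℕ) : ZMod m) ∈ G₂.verts := hyCx_v q le_rfl (by omega)
  have hne : C.f 0 ≠ C.f ((q:ℕ) : ZMod m) := by
    have := hCne 0 q (by omega) (by omega) (by omega)
    rwa [hcf0] at this
  have hAdjSplit : ∀ u v : V, G.Adj u v → G₁.Adj u v ∨ G₂.Adj u v := by
    intro u v h
    have h2 : (G₁ ⊔ G₂).Adj u v := by
      rw [hsep.1]; exact SimpleGraph.Subgraph.top_adj.mpr h
    exact SimpleGraph.Subgraph.sup_adj.mp h2
  have hmemxy : ∀ u, u ∈ G₁.verts → u ∈ G₂.verts →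
      u = C.f 0 ∨ u = C.f ((q:ℕ) : ZMod m) := by
    intro u h1 h2
    have : u ∈ ({C.f 0, C.f ((q:ℕ) : ZMod m)} : Set V) := hxy ▸ ⟨h1, h2⟩
    simpa using this
  have hstar₁ : ∀ u v : V, u ∈ G₁.verts → u ≠ C.f 0 → u ≠ C.f ((q:ℕ) : ZMod m) →
      G.Adj u v → G₁.Adj u v := by
    intro u v hu hux huy h
    rcases hAdjSplit u v h with h' | h'
    · exact h'
    · rcases hmemxy u hu (G₂.edge_vert h') with h'' | h''
      · exact absurd h'' hux
      · exact absurd h'' huy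
  have hstar₂ : ∀ u v : V, u ∈ G₂.verts → u ≠ C.f ((q:ℕ) : ZMod m) → u ≠ C.f 0 →
      G.Adj u v → G₂.Adj u v := by
    intro u v hu hux huy h
    rcases hAdjSplit u v h with h' | h'
    · rcases hmemxy u (G₁.edge_vert h') hu with h'' | h''
      · exact absurd h'' huy
      · exact absurd h'' hux
    · exact h'
  constructor
  · -- side 1
    intro C₁ htrace
    have hq2 : 2 ≤ q := by have := C₁.three_le; omega
    haveI : NeZero (q+1) := ⟨by omega⟩
    have hsucc : ∀ (i : ZMod (q+1)), i.val < q → (i+1).val = i.val + 1 := by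
      intro i hi
      have h1 : ((i.val + 1 : ℕ) : ZMod (q+1)) = i + 1 := by
        rw [Nat.cast_add, Nat.cast_one, ZMod.natCast_rightInverse i]
      rw [← h1, ZMod.val_cast_of_lt (by omega)]
    -- the arc A₁ : drawing of yCx
    set Bfun : ℕ → Set (ℝ × ℝ) := fun k => E.arc s(cf (q+k), cf (q+k+1)) with hBfun
    set A₁ : Set (ℝ × ℝ) := ⋃ k ∈ Finset.range (m-q), Bfun k with hA₁def
    have hBspec : ∀ k, k < m - q →
        IsArc (Bfun k) (E.vmap (cf (q+k))) (E.vmap (cf (q+(k+1)))) := by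
      intro k hk
      have h := E.arc_spec (cf (q+k)) (cf (q+k+1)) (hadj (q+k))
      rw [show q + (k+1) = (q+k)+1 by ring]
      exact h
    have hBmeet : ∀ k l, k < l → l < m - q →
        Bfun k ∩ Bfun l ⊆ (if l = k+1 then {E.vmap (cf (q+l))} else ∅) := by
      intro k l hkl hl
      have ha : q + k < m := by omega
      have hb : q + l < m := by omega
      have hne_ab : cf (q+k) ≠ cf (q+l) := hCne _ _ ha hb (by omega)
      have hne_ab1 : cf (q+k) ≠ cf (q+l+1) := by
        by_cases h : q + l + 1 = m
        · rw [h, hcfm]; exact hCne _ _ ha (by omega) (by omega)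
        · exact hCne _ _ ha (by omega) (by omega)
      have hne_a1b1 : cf (q+k+1) ≠ cf (q+l+1) := by
        by_cases h : q + l + 1 = m
        · rw [h, hcfm]; exact hCne _ _ (by omega) (by omega) (by omega)
        · exact hCne _ _ (by omega) (by omega) (by omega)
      have hene : s(cf (q+k), cf (q+k+1)) ≠ s(cf (q+l), cf (q+l+1)) := by
        intro heq
        rcases Sym2.eq_iff.mp heq with ⟨h1, -⟩ | ⟨h1, -⟩
        · exact hne_ab h1
        · exact hne_ab1 h1
      have hmeet := E.arc_meet _ (hedge (q+k)) _ (hedge (q+l)) hene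
      by_cases hcons : l = k + 1
      · rw [if_pos hcons]
        intro z hz
        obtain ⟨w, hw1, hw2, hw3⟩ := hmeet hz
        rw [Sym2.mem_iff] at hw1 hw2
        rcases hw1 with rfl | rfl <;> rcases hw2 with h | h
        · exact absurd h hne_ab
        · exact absurd h hne_ab1
        · rw [hw3, h]; exact rfl
        · exact absurd h hne_a1b1
      · rw [if_neg hcons]
        intro z hz
        obtain ⟨w, hw1, hw2, -⟩ := hmeet hz
        exfalso
        have hne_a1b : cf (q+k+1) ≠ cf (q+l) := hCne _ _ (by omega) hb (by omega)
        rw [Sym2.mem_iff] at hw1 hw2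
        rcases hw1 with rfl | rfl <;> rcases hw2 with h | h
        · exact hne_ab h
        · exact hne_ab1 h
        · exact hne_a1b h
        · exact hne_a1b1 h
    have hAgen : IsArc A₁ (E.vmap (C.f 0)) (E.vmap (C.f ((q:ℕ) : ZMod m))) := by
      have h := isArc_chain (fun k => E.vmap (cf (q+k))) Bfun (m-q) hBspec hBmeet
        (m-q) (by omega) le_rfl
      rw [show q + (m - q) = m by omega, hcfm, hcf0] at h
      rw [show q + 0 = q by ring] at h
      exact h.symm
    have hG2edge : ∀ k, k < m - q → s(cf (q+k), cf (q+k+1)) ∈ G₂.edgeSet := by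
      intro k hk
      rw [SimpleGraph.Subgraph.mem_edgeSet]
      have := hyCx_e (q+k) (by omega) (by omega)
      rwa [← hcf_succ] at this
    have hG2vert : ∀ k, k < m - q → ∀ w, w ∈ s(cf (q+k), cf (q+k+1)) → w ∈ G₂.verts := by
      intro k hk w hw
      rw [Sym2.mem_iff] at hw
      rcases hw with rfl | rfl
      · exact hyCx_v (q+k) (by omega) (by omega)
      · by_cases hqk : q+k+1 = m
        · rw [hqk, hcfm, hcf0]; exact hx2
        · exact hyCx_v (q+k+1) (by omega) (by omega)
    have hA1gen : ∀ e ∈ G₁.edgeSet, A₁ ∩ E.arc e ⊆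
        {p | ∃ w : V, (w = C.f 0 ∨ w = C.f ((q:ℕ) : ZMod m)) ∧ w ∈ e ∧ p = E.vmap w} := by
      intro e he z hz
      obtain ⟨hz1, hz2⟩ := hz
      rw [hA₁def] at hz1
      simp only [Set.mem_iUnion, exists_prop, Finset.mem_range] at hz1
      obtain ⟨k, hk, hzk⟩ := hz1
      have hnee : s(cf (q+k), cf (q+k+1)) ≠ e := by
        intro hcontra
        exact (Set.disjoint_left.mp hsep.2.1 he) (hcontra ▸ hG2edge k hk)
      obtain ⟨w, hw1, hw2, hw3⟩ := E.arc_meet _ (hedge (q+k)) e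
        (G₁.edgeSet_subset he) hnee ⟨hzk, hz2⟩
      exact ⟨w, hmemxy w (SimpleGraph.Subgraph.mem_verts_of_mem_edge he hw2)
        (hG2vert k hk w hw1), hw2, hw3⟩
    have hA2gen : ∀ w : V, w ∈ G₁.verts → E.vmap w ∈ A₁ →
        w = C.f 0 ∨ w = C.f ((q:ℕ) : ZMod m) := by
      intro w hw hmem
      rw [hA₁def] at hmem
      simp only [Set.mem_iUnion, exists_prop, Finset.mem_range] at hmem
      obtain ⟨k, hk, hzk⟩ := hmem
      have := E.arc_vertex _ (hedge (q+k)) w hzk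
      exact hmemxy w hw (hG2vert k hk w this)
    have hAsubgen : A₁ ⊆ ⋃ e ∈ G.edgeSet, E.arc e := by
      intro z hz
      rw [hA₁def] at hz
      simp only [Set.mem_iUnion, exists_prop, Finset.mem_range] at hz
      obtain ⟨k, hk, hzk⟩ := hz
      exact Set.mem_biUnion (hedge (q+k)) hzk
    have hdag : ∀ j : ZMod m, C.f j ∈ G₁.verts →
        ∃ i : ZMod (q+1), ((C₁.f i : V)) = C.f j := by
      intro j hj
      have hjeq : C.f j = cf j.val := congrArg C.f (ZMod.natCast_rightInverse j).symm
      have hjv : j.val < m := ZMod.val_lt j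
      by_cases hjq : j.val ≤ q
      · refine ⟨((j.val : ℕ) : ZMod (q+1)), ?_⟩
        rw [htrace, ZMod.val_cast_of_lt (by omega), hjeq]
      · have hj2 : C.f j ∈ G₂.verts := by
          rw [hjeq]; exact hyCx_v j.val (by omega) (by omega)
        rcases hmemxy _ hj hj2 with h | h
        · refine ⟨0, ?_⟩
          rw [htrace, ZMod.val_zero, Nat.cast_zero, h]
        · refine ⟨((q : ℕ) : ZMod (q+1)), ?_⟩
          rw [htrace, ZMod.val_cast_of_lt (by omega), h]
    have hx' : ∃ i : ZMod (q+1), ((C₁.f i : V)) = C.f 0 := by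
      refine ⟨0, ?_⟩
      rw [htrace, ZMod.val_zero, Nat.cast_zero]
    have hy' : ∃ i : ZMod (q+1), ((C₁.f i : V)) = C.f ((q:ℕ) : ZMod m) := by
      refine ⟨((q : ℕ) : ZMod (q+1)), ?_⟩
      rw [htrace, ZMod.val_cast_of_lt (by omega)]
    have hcond_ne : ∀ a : ℕ, a < q →
        s(cf a, cf (a+1)) ≠ s(C.f 0, C.f ((q:ℕ) : ZMod m)) := by
      intro a haq heq
      rcases Sym2.eq_iff.mp heq with ⟨h1, h2⟩ | ⟨h1, h2⟩
      · rw [← hcf0] at h1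
        have e1 := hCmod a 0 h1
        rw [Nat.mod_eq_of_lt (by omega), Nat.mod_eq_of_lt (by omega)] at e1
        have e2 := hCmod (a+1) q h2
        rw [Nat.mod_eq_of_lt (by omega), Nat.mod_eq_of_lt (by omega)] at e2
        omega
      · have e1 := hCmod a q h1
        rw [Nat.mod_eq_of_lt (by omega), Nat.mod_eq_of_lt (by omega)] at e1
        omega
    have hcond_eq : s(cf q, cf 0) = s(C.f 0, C.f ((q:ℕ) : ZMod m)) := by
      rw [hcf0]
      exact Sym2.eq_swap
    have hi1zero : ∀ i : ZMod (q+1), i.val = q → i + 1 = 0 := by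
      intro i hiv
      have h1 : i = ((q : ℕ) : ZMod (q+1)) := by
        rw [← ZMod.natCast_rightInverse i, hiv]
      rw [h1, show ((q:ℕ) : ZMod (q+1)) + 1 = ((q+1 : ℕ) : ZMod (q+1)) by push_cast; ring,
        ZMod.natCast_self]
    have harc_eq : ∀ a : ℕ, E.arc s(C.f ((a:ℕ):ZMod m), C.f (((a:ℕ):ZMod m) + 1))
        = E.arc s(cf a, cf (a+1)) := by
      intro a
      rw [← hcf_succ]
    have hcov : (⋃ i : ZMod (q+1), (if s(((C₁.f i : V)), ((C₁.f (i+1) : V)))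
          = s(C.f 0, C.f ((q:ℕ) : ZMod m)) then A₁
          else E.arc s((C₁.f i : V), (C₁.f (i+1) : V))))
        = ⋃ i : ZMod m, E.arc s(C.f i, C.f (i + 1)) := by
      ext z
      simp only [Set.mem_iUnion]
      constructor
      · rintro ⟨i, hi⟩
        have hival : i.val ≤ q := by have := ZMod.val_lt i; omega
        by_cases hiq : i.val < q
        · have h1 : (C₁.f i : V) = cf i.val := htrace i
          have h2 : (C₁.f (i+1) : V) = cf (i.val + 1) := by
            rw [htrace (i+1), hsucc i hiq]
          rw [h1, h2, if_neg (hcond_ne i.val hiq)] at hi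
          refine ⟨((i.val : ℕ) : ZMod m), ?_⟩
          rw [harc_eq i.val]
          exact hi
        · have hiq' : i.val = q := by omega
          have h1 : (C₁.f i : V) = cf q := by rw [htrace i, hiq']
          have h2 : (C₁.f (i+1) : V) = cf 0 := by
            rw [hi1zero i hiq', htrace 0, ZMod.val_zero]
          rw [h1, h2, if_pos hcond_eq] at hi
          rw [hA₁def] at hi
          simp only [Set.mem_iUnion, exists_prop, Finset.mem_range] at hi
          obtain ⟨k, hk, hzk⟩ := hi
          refine ⟨((q+k : ℕ) : ZMod m), ?_⟩
          rw [harc_eq (q+k)]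
          exact hzk
      · rintro ⟨j, hj⟩
        have hjv : j.val < m := ZMod.val_lt j
        have hjeq : C.f j = cf j.val := congrArg C.f (ZMod.natCast_rightInverse j).symm
        have hjeq1 : C.f (j + 1) = cf (j.val + 1) := by
          rw [hcf_succ, ZMod.natCast_rightInverse j]
        rw [hjeq, hjeq1] at hj
        by_cases hk : j.val < q
        · refine ⟨((j.val : ℕ) : ZMod (q+1)), ?_⟩
          have hval : (((j.val:ℕ) : ZMod (q+1))).val = j.val := ZMod.val_cast_of_lt (by omega)
          have h1 : (C₁.f ((j.val:ℕ):ZMod (q+1)) : V) = cf j.val := by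
            rw [htrace, hval]
          have h2 : (C₁.f (((j.val:ℕ):ZMod (q+1)) + 1) : V) = cf (j.val + 1) := by
            rw [htrace, hsucc _ (by rw [hval]; omega), hval]
          rw [h1, h2, if_neg (hcond_ne j.val hk)]
          exact hj
        · refine ⟨((q:ℕ) : ZMod (q+1)), ?_⟩
          have hvq : (((q:ℕ) : ZMod (q+1))).val = q := ZMod.val_cast_of_lt (by omega)
          have h1 : (C₁.f ((q:ℕ):ZMod (q+1)) : V) = cf q := by rw [htrace, hvq]
          have h2 : (C₁.f (((q:ℕ):ZMod (q+1)) + 1) : V) = cf 0 := by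
            rw [hi1zero _ hvq, htrace 0, ZMod.val_zero]
          rw [h1, h2, if_pos hcond_eq]
          rw [hA₁def]
          simp only [Set.mem_iUnion, exists_prop, Finset.mem_range]
          refine ⟨j.val - q, by omega, ?_⟩
          rw [hBfun]
          simp only
          rw [show q + (j.val - q) = j.val by omega]
          exact hj
    exact generic_circuit G C hGC G₁ (C.f 0) (C.f ((q:ℕ) : ZMod m)) hne hx1 hy1 hstar₁
      _ rfl C₁ hdag hx' hy' E hCE A₁ hAgen hA1gen hA2gen hAsubgen hcov
  · -- side 2
    intro C₂ htrace
    have hmq2 : 2 ≤ m - q := by have := C₂.three_le; omega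
    haveI : NeZero (m-q+1) := ⟨by omega⟩
    have hsucc : ∀ (i : ZMod (m-q+1)), i.val < m-q → (i+1).val = i.val + 1 := by
      intro i hi
      have h1 : ((i.val + 1 : ℕ) : ZMod (m-q+1)) = i + 1 := by
        rw [Nat.cast_add, Nat.cast_one, ZMod.natCast_rightInverse i]
      rw [← h1, ZMod.val_cast_of_lt (by omega)]
    set Bfun : ℕ → Set (ℝ × ℝ) := fun k => E.arc s(cf k, cf (k+1)) with hBfun
    set A₂ : Set (ℝ × ℝ) := ⋃ k ∈ Finset.range q, Bfun k with hA₂def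
    have hBspec : ∀ k, k < q →
        IsArc (Bfun k) (E.vmap (cf k)) (E.vmap (cf (k+1))) := by
      intro k hk
      exact E.arc_spec (cf k) (cf (k+1)) (hadj k)
    have hBmeet : ∀ k l, k < l → l < q →
        Bfun k ∩ Bfun l ⊆ (if l = k+1 then {E.vmap (cf l)} else ∅) := by
      intro k l hkl hl
      have hne_ab : cf k ≠ cf l := hCne _ _ (by omega) (by omega) (by omega)
      have hne_ab1 : cf k ≠ cf (l+1) := hCne _ _ (by omega) (by omega) (by omega)
      have hne_a1b1 : cf (k+1) ≠ cf (l+1) := hCne _ _ (by omega) (by omega) (by omega)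
      have hene : s(cf k, cf (k+1)) ≠ s(cf l, cf (l+1)) := by
        intro heq
        rcases Sym2.eq_iff.mp heq with ⟨h1, -⟩ | ⟨h1, -⟩
        · exact hne_ab h1
        · exact hne_ab1 h1
      have hmeet := E.arc_meet _ (hedge k) _ (hedge l) hene
      by_cases hcons : l = k + 1
      · rw [if_pos hcons]
        intro z hz
        obtain ⟨w, hw1, hw2, hw3⟩ := hmeet hz
        rw [Sym2.mem_iff] at hw1 hw2
        rcases hw1 with rfl | rfl <;> rcases hw2 with h | h
        · exact absurd h hne_ab
        · exact absurd h hne_ab1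
        · rw [hw3, h]; exact rfl
        · exact absurd h hne_a1b1
      · rw [if_neg hcons]
        intro z hz
        obtain ⟨w, hw1, hw2, -⟩ := hmeet hz
        exfalso
        have hne_a1b : cf (k+1) ≠ cf l := hCne _ _ (by omega) (by omega) (by omega)
        rw [Sym2.mem_iff] at hw1 hw2
        rcases hw1 with rfl | rfl <;> rcases hw2 with h | h
        · exact hne_ab h
        · exact hne_ab1 h
        · exact hne_a1b h
        · exact hne_a1b1 h
    have hAgen : IsArc A₂ (E.vmap (C.f ((q:ℕ) : ZMod m))) (E.vmap (C.f 0)) := by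
      have h := isArc_chain (fun k => E.vmap (cf k)) Bfun q hBspec hBmeet q (by omega) le_rfl
      rw [hcf0] at h
      exact h.symm
    have hG1edge : ∀ k, k < q → s(cf k, cf (k+1)) ∈ G₁.edgeSet := by
      intro k hk
      rw [SimpleGraph.Subgraph.mem_edgeSet]
      have := hxCy_e k hk
      rwa [← hcf_succ] at this
    have hG1vert : ∀ k, k < q → ∀ w, w ∈ s(cf k, cf (k+1)) → w ∈ G₁.verts := by
      intro k hk w hw
      rw [Sym2.mem_iff] at hw
      rcases hw with rfl | rfl
      · exact hxCy_v k (by omega)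
      · exact hxCy_v (k+1) (by omega)
    have hA1gen : ∀ e ∈ G₂.edgeSet, A₂ ∩ E.arc e ⊆
        {p | ∃ w : V, (w = C.f ((q:ℕ) : ZMod m) ∨ w = C.f 0) ∧ w ∈ e ∧ p = E.vmap w} := by
      intro e he z hz
      obtain ⟨hz1, hz2⟩ := hz
      rw [hA₂def] at hz1
      simp only [Set.mem_iUnion, exists_prop, Finset.mem_range] at hz1
      obtain ⟨k, hk, hzk⟩ := hz1
      have hnee : s(cf k, cf (k+1)) ≠ e := by
        intro hcontra
        exact (Set.disjoint_left.mp hsep.2.1 (hG1edge k hk)) (hcontra ▸ he)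
      obtain ⟨w, hw1, hw2, hw3⟩ := E.arc_meet _ (hedge k) e
        (G₂.edgeSet_subset he) hnee ⟨hzk, hz2⟩
      exact ⟨w, (hmemxy w (hG1vert k hk w hw1)
        (SimpleGraph.Subgraph.mem_verts_of_mem_edge he hw2)).symm, hw2, hw3⟩
    have hA2gen : ∀ w : V, w ∈ G₂.verts → E.vmap w ∈ A₂ →
        w = C.f ((q:ℕ) : ZMod m) ∨ w = C.f 0 := by
      intro w hw hmem
      rw [hA₂def] at hmem
      simp only [Set.mem_iUnion, exists_prop, Finset.mem_range] at hmem
      obtain ⟨k, hk, hzk⟩ := hmem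
      have := E.arc_vertex _ (hedge k) w hzk
      exact (hmemxy w (hG1vert k hk w this) hw).symm
    have hAsubgen : A₂ ⊆ ⋃ e ∈ G.edgeSet, E.arc e := by
      intro z hz
      rw [hA₂def] at hz
      simp only [Set.mem_iUnion, exists_prop, Finset.mem_range] at hz
      obtain ⟨k, hk, hzk⟩ := hz
      exact Set.mem_biUnion (hedge k) hzk
    have hdag : ∀ j : ZMod m, C.f j ∈ G₂.verts →
        ∃ i : ZMod (m-q+1), ((C₂.f i : V)) = C.f j := by
      intro j hj
      have hjv : j.val < m := ZMod.val_lt j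
      have hjeq : C.f j = cf j.val := congrArg C.f (ZMod.natCast_rightInverse j).symm
      by_cases hjq : q ≤ j.val
      · refine ⟨((j.val - q : ℕ) : ZMod (m-q+1)), ?_⟩
        rw [htrace, ZMod.val_cast_of_lt (by omega), show q + (j.val - q) = j.val by omega]
        exact congrArg C.f (ZMod.natCast_rightInverse j)
      · have hj1 : C.f j ∈ G₁.verts := by
          rw [hjeq]; exact hxCy_v j.val (by omega)
        rcases hmemxy _ hj1 hj with h | h
        · refine ⟨((m - q : ℕ) : ZMod (m-q+1)), ?_⟩
          rw [htrace, ZMod.val_cast_of_lt (by omega), show q + (m-q) = m by omega,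
            ZMod.natCast_self, h]
        · refine ⟨0, ?_⟩
          rw [htrace, ZMod.val_zero, Nat.add_zero, h]
    have hx' : ∃ i : ZMod (m-q+1), ((C₂.f i : V)) = C.f ((q:ℕ) : ZMod m) := by
      refine ⟨0, ?_⟩
      rw [htrace, ZMod.val_zero, Nat.add_zero]
    have hy' : ∃ i : ZMod (m-q+1), ((C₂.f i : V)) = C.f 0 := by
      refine ⟨((m - q : ℕ) : ZMod (m-q+1)), ?_⟩
      rw [htrace, ZMod.val_cast_of_lt (by omega), show q + (m-q) = m by omega,
        ZMod.natCast_self]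
    have hcond_ne : ∀ a : ℕ, q ≤ a → a < m →
        s(cf a, cf (a+1)) ≠ s(C.f ((q:ℕ) : ZMod m), C.f 0) := by
      intro a haq ham heq
      rcases Sym2.eq_iff.mp heq with ⟨h1, h2⟩ | ⟨h1, h2⟩
      · have e1 := hCmod a q h1
        rw [Nat.mod_eq_of_lt (by omega), Nat.mod_eq_of_lt (by omega)] at e1
        rw [← hcf0] at h2
        have e2 := hCmod (a+1) 0 h2
        rw [Nat.zero_mod] at e2
        rcases Nat.lt_or_ge (a+1) m with hlt | hge
        · rw [Nat.mod_eq_of_lt hlt] at e2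
          omega
        · have : a + 1 = m := by omega
          omega
      · rw [← hcf0] at h1
        have e1 := hCmod a 0 h1
        rw [Nat.mod_eq_of_lt (by omega), Nat.zero_mod] at e1
        omega
    have hcond_eq : s(C.f 0, C.f ((q:ℕ) : ZMod m)) = s(C.f ((q:ℕ) : ZMod m), C.f 0) :=
      Sym2.eq_swap
    have hi1zero : ∀ i : ZMod (m-q+1), i.val = m-q → i + 1 = 0 := by
      intro i hiv
      have h1 : i = ((m-q : ℕ) : ZMod (m-q+1)) := by
        rw [← ZMod.natCast_rightInverse i, hiv]
      rw [h1, show ((m-q:ℕ) : ZMod (m-q+1)) + 1 = ((m-q+1 : ℕ) : ZMod (m-q+1)) by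
        push_cast; ring, ZMod.natCast_self]
    have harc_eq : ∀ a : ℕ, E.arc s(C.f ((a:ℕ):ZMod m), C.f (((a:ℕ):ZMod m) + 1))
        = E.arc s(cf a, cf (a+1)) := by
      intro a
      rw [← hcf_succ]
    have hcov : (⋃ i : ZMod (m-q+1), (if s(((C₂.f i : V)), ((C₂.f (i+1) : V)))
          = s(C.f ((q:ℕ) : ZMod m), C.f 0) then A₂
          else E.arc s((C₂.f i : V), (C₂.f (i+1) : V))))
        = ⋃ i : ZMod m, E.arc s(C.f i, C.f (i + 1)) := by
      ext z
      simp only [Set.mem_iUnion]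
      constructor
      · rintro ⟨i, hi⟩
        have hival : i.val ≤ m - q := by have := ZMod.val_lt i; omega
        by_cases hiq : i.val < m - q
        · have h1 : (C₂.f i : V) = cf (q + i.val) := htrace i
          have h2 : (C₂.f (i+1) : V) = cf (q + i.val + 1) := by
            rw [htrace (i+1), hsucc i hiq, show q + (i.val + 1) = q + i.val + 1 by omega]
          rw [h1, h2, if_neg (hcond_ne (q + i.val) (by omega) (by omega))] at hi
          refine ⟨((q + i.val : ℕ) : ZMod m), ?_⟩
          rw [harc_eq (q + i.val)]
          exact hi
        · have hiq' : i.val = m - q := by omega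
          have h1 : (C₂.f i : V) = C.f 0 := by
            rw [htrace i, hiq', show q + (m-q) = m by omega, ZMod.natCast_self]
          have h2 : (C₂.f (i+1) : V) = C.f ((q:ℕ) : ZMod m) := by
            rw [hi1zero i hiq', htrace 0, ZMod.val_zero, Nat.add_zero]
          rw [h1, h2, if_pos hcond_eq] at hi
          rw [hA₂def] at hi
          simp only [Set.mem_iUnion, exists_prop, Finset.mem_range] at hi
          obtain ⟨k, hk, hzk⟩ := hi
          refine ⟨((k : ℕ) : ZMod m), ?_⟩
          rw [harc_eq k]
          exact hzk
      · rintro ⟨j, hj⟩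
        have hjv : j.val < m := ZMod.val_lt j
        have hjeq : C.f j = cf j.val := congrArg C.f (ZMod.natCast_rightInverse j).symm
        have hjeq1 : C.f (j + 1) = cf (j.val + 1) := by
          rw [hcf_succ, ZMod.natCast_rightInverse j]
        rw [hjeq, hjeq1] at hj
        by_cases hk : q ≤ j.val
        · refine ⟨((j.val - q : ℕ) : ZMod (m-q+1)), ?_⟩
          have hval : (((j.val - q :ℕ) : ZMod (m-q+1))).val = j.val - q :=
            ZMod.val_cast_of_lt (by omega)
          have h1 : (C₂.f ((j.val - q :ℕ):ZMod (m-q+1)) : V) = cf j.val := by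
            rw [htrace, hval, show q + (j.val - q) = j.val by omega]
          have h2 : (C₂.f (((j.val - q :ℕ):ZMod (m-q+1)) + 1) : V) = cf (j.val + 1) := by
            rw [htrace, hsucc _ (by rw [hval]; omega), hval,
              show q + (j.val - q + 1) = j.val + 1 by omega]
          rw [h1, h2, if_neg (hcond_ne j.val hk hjv)]
          exact hj
        · refine ⟨((m - q :ℕ) : ZMod (m-q+1)), ?_⟩
          have hvq : (((m - q :ℕ) : ZMod (m-q+1))).val = m - q := ZMod.val_cast_of_lt (by omega)
          have h1 : (C₂.f ((m - q :ℕ):ZMod (m-q+1)) : V) = C.f 0 := by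
            rw [htrace, hvq, show q + (m-q) = m by omega, ZMod.natCast_self]
          have h2 : (C₂.f (((m - q :ℕ):ZMod (m-q+1)) + 1) : V) = C.f ((q:ℕ) : ZMod m) := by
            rw [hi1zero _ hvq, htrace 0, ZMod.val_zero, Nat.add_zero]
          rw [h1, h2, if_pos hcond_eq]
          rw [hA₂def]
          simp only [Set.mem_iUnion, exists_prop, Finset.mem_range]
          refine ⟨j.val, by omega, ?_⟩
          exact hj
    exact generic_circuit G C hGC G₂ (C.f ((q:ℕ) : ZMod m)) (C.f 0) hne.symm hy2 hx2 hstar₂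
      _ rfl C₂ hdag hx' hy' E hCE A₂ hAgen hA1gen hA2gen hAsubgen hcov


end Paper
end

section
/- Let (G,C) be a circuit graph, let u,v ∈ V(C) be distinct and let e ∈ E(C) be such that u, e, v occur on C in clockwise order. Let (G₁,G₂) be a 2-separation of G with V(G₁ ∩ G₂) = {x,y}, where x ∈ V(eCv), y ∈ V(uCe), {u,v} ⊆ V(G₁), e ∈ E(G₂), xCy ⊆ G₁ and yCx ⊆ G₂. Let G₁' = G₁ + xy be the plane graph with outer cycle C₁ = xCy + yx, let G₂' = G₂ + xy be the plane graph with outer cycle C₂ = yCx + xy, and set e₁ = xy ∈ E(C₁). Then τ_{G₁'}(e₁v) + τ_{G₂'}(ex) ≤ τ_G(ev) + 2/3 and τ_{G₁'}(ue₁) + τ_{G₂'}(ye) ≤ τ_G(ue) + 2/3. -/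
open scoped Classical

namespace Paper

/-- Lift a subgraph of the augmented graph on `Ga.verts` back to a subgraph of `G`,
keeping only the edges that are edges of `Ga`. -/
def liftSub {V : Type} (G : SimpleGraph V) (Ga : G.Subgraph)
    {A : SimpleGraph Ga.verts} (H : A.Subgraph) : G.Subgraph where
  verts := Subtype.val '' H.verts
  Adj u v := ∃ (hu : u ∈ Ga.verts) (hv : v ∈ Ga.verts),
    Ga.Adj u v ∧ H.Adj ⟨u, hu⟩ ⟨v, hv⟩
  adj_sub := by rintro u v ⟨hu, hv, h, _⟩; exact Ga.adj_sub h
  edge_vert := by rintro u v ⟨hu, hv, h, h2⟩; exact ⟨⟨u, hu⟩, h2.fst_mem, rfl⟩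
  symm := ⟨by rintro u v ⟨hu, hv, h, h2⟩; exact ⟨hv, hu, h.symm, h2.symm⟩⟩

lemma transfer {V : Type} [Fintype V] (G : SimpleGraph V) {m : ℕ} (C : OrientedCycle G m)
    (Ga Gb : G.Subgraph) (hsup : Ga ⊔ Gb = ⊤) (hdisjE : Disjoint Ga.edgeSet Gb.edgeSet)
    (x y : V) (hcut : Ga.verts ∩ Gb.verts = {x, y}) (hxyne : x ≠ y)
    (hxv : x ∈ Ga.verts) (hyv : y ∈ Ga.verts)
    (w₁ w₂ : V) (hw : Gb.Adj w₁ w₂)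
    {n : ℕ}
    (D : OrientedCycle (Ga.coe ⊔ SimpleGraph.fromEdgeSet
      {e' : Sym2 Ga.verts | Sym2.map (Subtype.val) e' = s(x, y)}) n)
    (o : ℕ)
    (hcompat : ∀ ι : ZMod n, ((D.f ι : V) = C.f ((o + ι.val : ℕ) : ZMod m)))
    (P Q i j i' j' : ℕ) (hij : i ≤ j) (hjn : j < n)
    (hi' : ((o + i : ℕ) : ZMod m) = ((i' : ℕ) : ZMod m))
    (hd : j' = i' + (j - i)) (hP : P ≤ i') (hQ : j' ≤ Q)
    (hne : ∀ k, i ≤ k → k < j →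
      s(C.f ((o + k : ℕ) : ZMod m), C.f ((o + k + 1 : ℕ) : ZMod m)) ≠ s(x, y))
    (H₁ H₂ : (Ga.coe ⊔ SimpleGraph.fromEdgeSet
      {e' : Sym2 Ga.verts | Sym2.map (Subtype.val) e' = s(x, y)}).Subgraph)
    (hsepA : IsKSeparation _ 2 H₁ H₂)
    (hHcut : H₁.verts ∩ H₂.verts = {D.f (i : ZMod n), D.f (j : ZMod n)})
    (hsegv : ∀ k : ℕ, i ≤ k → k ≤ j → D.f (k : ZMod n) ∈ H₂.verts)
    (hsege : ∀ k : ℕ, i ≤ k → k < j →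
      H₂.Adj (D.f (k : ZMod n)) (D.f ((k : ZMod n) + 1)))
    (hcard : 3 ≤ H₂.verts.ncard) :
    ¬ SegGood G C P Q := by
  intro hgood
  apply hgood
  haveI : NeZero n := ⟨by have := D.three_le; omega⟩
  obtain ⟨hsupH, hdisjH, hcardH, hnle₁, hnle₂⟩ := hsepA
  -- basic cast facts
  have hcast : ∀ d : ℕ, ((o + i + d : ℕ) : ZMod m) = ((i' + d : ℕ) : ZMod m) := by
    intro d; push_cast at hi' ⊢; rw [hi']
  have hvD : ∀ k : ℕ, k < n → ((D.f ((k : ℕ) : ZMod n) : V) = C.f ((o + k : ℕ) : ZMod m)) := by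
    intro k hk; rw [hcompat, ZMod.val_natCast_of_lt hk]
  have hDi : (D.f ((i : ℕ) : ZMod n) : V) = C.f ((i' : ℕ) : ZMod m) := by
    rw [hvD i (by omega), hi']
  have hDj : (D.f ((j : ℕ) : ZMod n) : V) = C.f ((j' : ℕ) : ZMod m) := by
    rw [hvD j hjn]
    have h1 : o + j = o + i + (j - i) := by omega
    rw [h1, hcast, hd]
  -- the two lifted subgraphs
  set L₁ := liftSub G Ga H₁ with hL₁
  set L₂ := liftSub G Ga H₂ with hL₂
  have hL₁v : L₁.verts = Subtype.val '' H₁.verts := rfl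
  have hL₂v : L₂.verts = Subtype.val '' H₂.verts := rfl
  -- segment vertices
  have hkey : ∀ k : ℕ, i' ≤ k → ((k : ℕ) : ZMod m) = ((o + (i + (k - i')) : ℕ) : ZMod m) := by
    intro k hk
    have h1 : o + (i + (k - i')) = o + i + (k - i') := by omega
    rw [h1, hcast (k - i')]
    congr 1
    omega
  have hsegv' : ∀ k : ℕ, i' ≤ k → k ≤ j' → C.f ((k : ℕ) : ZMod m) ∈ L₂.verts := by
    intro k hk1 hk2
    refine ⟨D.f ((i + (k - i') : ℕ) : ZMod n), hsegv (i + (k - i')) (by omega) (by omega), ?_⟩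
    rw [hvD (i + (k - i')) (by omega), ← hkey k hk1]
  -- segment edges
  have hsege' : ∀ k : ℕ, i' ≤ k → k < j' →
      L₂.Adj (C.f ((k : ℕ) : ZMod m)) (C.f (((k : ℕ) : ZMod m) + 1)) := by
    intro k hk1 hk2
    set k₀ := i + (k - i') with hk₀
    have hk₀j : k₀ < j := by omega
    have hadj := hsege k₀ (by omega) hk₀j
    have hz1 : ((k₀ : ℕ) : ZMod n) + 1 = ((k₀ + 1 : ℕ) : ZMod n) := by push_cast; ring
    have e1 : (((k : ℕ) : ZMod m) + 1) = ((k + 1 : ℕ) : ZMod m) := by push_cast; ring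
    have hval1 : (D.f ((k₀ : ℕ) : ZMod n) : V) = C.f ((k : ℕ) : ZMod m) := by
      rw [hvD k₀ (by omega), ← hkey k hk1]
    have hval2 : (D.f (((k₀ : ℕ) : ZMod n) + 1) : V) = C.f (((k : ℕ) : ZMod m) + 1) := by
      rw [hz1, hvD (k₀ + 1) (by omega), e1, hkey (k + 1) (by omega),
        show o + (i + (k + 1 - i')) = o + (k₀ + 1) from by omega]
    have hGaAdj : Ga.Adj (D.f ((k₀ : ℕ) : ZMod n) : V) (D.f (((k₀ : ℕ) : ZMod n) + 1) : V) := by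
      have hAadj := H₂.adj_sub hadj
      rcases hAadj with hc | hc
      · exact hc
      · exfalso
        rw [SimpleGraph.fromEdgeSet_adj] at hc
        apply hne k₀ (by omega) hk₀j
        have hmape := hc.1
        rw [Set.mem_setOf_eq, Sym2.map_pair_eq] at hmape
        rw [← hmape, hvD k₀ (by omega), hz1, hvD (k₀ + 1) (by omega),
          show o + k₀ + 1 = o + (k₀ + 1) from by omega]
    rw [← hval1, ← hval2]
    exact ⟨(D.f _).2, (D.f _).2, hGaAdj, hadj⟩
  -- covering of G-adjacency
  have hGaAdj_or : ∀ u v : V, Ga.Adj u v → L₁.Adj u v ∨ L₂.Adj u v := by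
    intro u v h
    have hu : u ∈ Ga.verts := h.fst_mem
    have hv : v ∈ Ga.verts := h.snd_mem
    have htop : (⊤ : (Ga.coe ⊔ SimpleGraph.fromEdgeSet
        {e' : Sym2 Ga.verts | Sym2.map (Subtype.val) e' = s(x, y)}).Subgraph).Adj
        ⟨u, hu⟩ ⟨v, hv⟩ := SimpleGraph.Subgraph.top_adj.mpr (Or.inl h)
    rw [← hsupH] at htop
    rcases SimpleGraph.Subgraph.sup_adj.mp htop with h2 | h2
    · exact Or.inl ⟨hu, hv, h, h2⟩
    · exact Or.inr ⟨hu, hv, h, h2⟩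
  have hGadj_or : ∀ u v : V, G.Adj u v → (L₁.Adj u v ∨ L₂.Adj u v) ∨ Gb.Adj u v := by
    intro u v h
    have htop : (⊤ : G.Subgraph).Adj u v := SimpleGraph.Subgraph.top_adj.mpr h
    rw [← hsup] at htop
    rcases SimpleGraph.Subgraph.sup_adj.mp htop with h2 | h2
    · exact Or.inl (hGaAdj_or u v h2)
    · exact Or.inr h2
  -- vertex covering
  have hvertsU : L₁.verts ∪ L₂.verts = Ga.verts := by
    rw [hL₁v, hL₂v, ← Set.image_union]
    have h1 : H₁.verts ∪ H₂.verts = Set.univ := by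
      rw [← SimpleGraph.Subgraph.verts_sup, hsupH, SimpleGraph.Subgraph.verts_top]
    rw [h1, Subtype.coe_image_univ]
  -- intersection of lifts
  have hvertsI : L₁.verts ∩ L₂.verts =
      {C.f ((i' : ℕ) : ZMod m), C.f ((j' : ℕ) : ZMod m)} := by
    rw [hL₁v, hL₂v, ← Set.image_inter Subtype.val_injective, hHcut,
      Set.image_insert_eq, Set.image_singleton, hDi, hDj]
  -- disjointness of lifted edges
  have hLdisj : Disjoint L₁.edgeSet L₂.edgeSet := by
    rw [Set.disjoint_left]
    intro e he1 he2
    induction e with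
    | _ u v =>
      rw [SimpleGraph.Subgraph.mem_edgeSet] at he1 he2
      obtain ⟨hu1, hv1, _, hH1⟩ := he1
      obtain ⟨hu2, hv2, _, hH2⟩ := he2
      exact Set.disjoint_left.mp hdisjH
        (SimpleGraph.Subgraph.mem_edgeSet.mpr hH1)
        (SimpleGraph.Subgraph.mem_edgeSet.mpr hH2)
  -- lifted edges are Ga-edges, hence disjoint from Gb
  have hLGb : ∀ H : (Ga.coe ⊔ SimpleGraph.fromEdgeSet
      {e' : Sym2 Ga.verts | Sym2.map (Subtype.val) e' = s(x, y)}).Subgraph,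
      Disjoint (liftSub G Ga H).edgeSet Gb.edgeSet := by
    intro H
    rw [Set.disjoint_left]
    intro e he1 he2
    induction e with
    | _ u v =>
      rw [SimpleGraph.Subgraph.mem_edgeSet] at he1 he2
      obtain ⟨hu1, hv1, hGa1, _⟩ := he1
      exact Set.disjoint_left.mp hdisjE
        (SimpleGraph.Subgraph.mem_edgeSet.mpr hGa1)
        (SimpleGraph.Subgraph.mem_edgeSet.mpr he2)
  -- cardinality of lifted H₂
  have hL₂card : 3 ≤ L₂.verts.ncard := by
    rw [hL₂v, Set.ncard_image_of_injective _ Subtype.val_injective]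
    exact hcard
  -- distinctness of the two cut vertices
  have hDne : D.f ((i : ℕ) : ZMod n) ≠ D.f ((j : ℕ) : ZMod n) := by
    intro hh
    rw [hHcut, hh] at hcardH
    simp only [Set.pair_eq_singleton, Set.ncard_singleton] at hcardH
    omega
  have hstne : C.f ((i' : ℕ) : ZMod m) ≠ C.f ((j' : ℕ) : ZMod m) := by
    rw [← hDi, ← hDj]
    exact fun h => hDne (Subtype.val_injective h)
  have hncard2 : ({C.f ((i' : ℕ) : ZMod m), C.f ((j' : ℕ) : ZMod m)} : Set V).ncard = 2 :=
    Set.ncard_pair hstne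
  -- the special vertices
  have hxyh : (⟨x, hxv⟩ : Ga.verts) ≠ ⟨y, hyv⟩ := fun h => hxyne (congrArg Subtype.val h)
  have hAxy : (Ga.coe ⊔ SimpleGraph.fromEdgeSet
      {e' : Sym2 Ga.verts | Sym2.map (Subtype.val) e' = s(x, y)}).Adj ⟨x, hxv⟩ ⟨y, hyv⟩ := by
    refine Or.inr ?_
    rw [SimpleGraph.fromEdgeSet_adj]
    exact ⟨by rw [Set.mem_setOf_eq, Sym2.map_pair_eq], hxyh⟩
  have hH12xy : H₁.Adj ⟨x, hxv⟩ ⟨y, hyv⟩ ∨ H₂.Adj ⟨x, hxv⟩ ⟨y, hyv⟩ := by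
    have htop : (⊤ : (Ga.coe ⊔ SimpleGraph.fromEdgeSet
        {e' : Sym2 Ga.verts | Sym2.map (Subtype.val) e' = s(x, y)}).Subgraph).Adj
        ⟨x, hxv⟩ ⟨y, hyv⟩ := SimpleGraph.Subgraph.top_adj.mpr hAxy
    rw [← hsupH] at htop
    exact SimpleGraph.Subgraph.sup_adj.mp htop
  -- member of intersection Ga/Gb is x or y
  have hGaGb : ∀ z : V, z ∈ Ga.verts → z ∈ Gb.verts → z = x ∨ z = y := by
    intro z h1 h2
    have hz : z ∈ ({x, y} : Set V) := hcut ▸ ⟨h1, h2⟩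
    simpa using hz
  -- the big-side extra vertex
  have hbig : ∃ w0, w0 ∈ H₂.verts ∧
      w0 ∉ ({D.f ((i : ℕ) : ZMod n), D.f ((j : ℕ) : ZMod n)} : Set Ga.verts) := by
    by_contra hcon
    push_neg at hcon
    have hsub : H₂.verts ⊆ {D.f ((i : ℕ) : ZMod n), D.f ((j : ℕ) : ZMod n)} := hcon
    have h1 := Set.ncard_le_ncard hsub (Set.toFinite _)
    have h2 : ({D.f ((i : ℕ) : ZMod n), D.f ((j : ℕ) : ZMod n)} : Set Ga.verts).ncard ≤ 2 := by
      refine le_trans (Set.ncard_insert_le _ _) ?_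
      simp
    omega
  -- membership transfer for cut
  have hmap : ∀ zh : Ga.verts, zh ∈ H₁.verts → zh ∈ H₂.verts →
      (zh : V) ∈ ({C.f ((i' : ℕ) : ZMod m), C.f ((j' : ℕ) : ZMod m)} : Set V) := by
    intro zh h1 h2
    have hz : zh ∈ ({D.f ((i : ℕ) : ZMod n), D.f ((j : ℕ) : ZMod n)} : Set Ga.verts) :=
      hHcut ▸ ⟨h1, h2⟩
    simp only [Set.mem_insert_iff, Set.mem_singleton_iff] at hz ⊢
    rcases hz with h | h
    · left; rw [h, hDi]
    · right; rw [h, hDj]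
  have hDi_mem : D.f ((i : ℕ) : ZMod n) ∈ H₁.verts ∩ H₂.verts := by
    rw [hHcut]; exact Set.mem_insert _ _
  have hDj_mem : D.f ((j : ℕ) : ZMod n) ∈ H₁.verts ∩ H₂.verts := by
    rw [hHcut]; exact Set.mem_insert_of_mem _ rfl
  have hsegvB : ∀ k : ℕ, i' ≤ k → k ≤ j' → C.f ((k : ℕ) : ZMod m) ∈ (L₂ ⊔ Gb).verts := by
    intro k hk1 hk2
    rw [SimpleGraph.Subgraph.verts_sup]
    exact Or.inl (hsegv' k hk1 hk2)
  have hsegeB : ∀ k : ℕ, i' ≤ k → k < j' →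
      (L₂ ⊔ Gb).Adj (C.f ((k : ℕ) : ZMod m)) (C.f (((k : ℕ) : ZMod m) + 1)) := by
    intro k hk1 hk2
    exact SimpleGraph.Subgraph.sup_adj.mpr (Or.inl (hsege' k hk1 hk2))
  by_cases hB : H₂.Adj ⟨x, hxv⟩ ⟨y, hyv⟩
  · -- Case B : the xy-edge belongs to H₂; attach Gb to the lift of H₂
    have hxH2 : (⟨x, hxv⟩ : Ga.verts) ∈ H₂.verts := hB.fst_mem
    have hyH2 : (⟨y, hyv⟩ : Ga.verts) ∈ H₂.verts := hB.snd_mem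
    have hcutB : L₁.verts ∩ (L₂ ⊔ Gb).verts
        = {C.f ((i' : ℕ) : ZMod m), C.f ((j' : ℕ) : ZMod m)} := by
      apply Set.Subset.antisymm
      · rintro z ⟨hz1, hz2⟩
        rw [SimpleGraph.Subgraph.verts_sup] at hz2
        rcases hz2 with hz2 | hz2
        · exact hvertsI ▸ ⟨hz1, hz2⟩
        · obtain ⟨zh, hzh, rfl⟩ := hz1
          rcases hGaGb _ zh.2 hz2 with h | h
          · exact hmap zh hzh (by rw [show zh = ⟨x, hxv⟩ from Subtype.ext h]; exact hxH2)
          · exact hmap zh hzh (by rw [show zh = ⟨y, hyv⟩ from Subtype.ext h]; exact hyH2)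
      · intro z hz
        simp only [Set.mem_insert_iff, Set.mem_singleton_iff] at hz
        rw [SimpleGraph.Subgraph.verts_sup]
        rcases hz with rfl | rfl
        · exact ⟨⟨_, hDi_mem.1, hDi⟩, Or.inl ⟨_, hDi_mem.2, hDi⟩⟩
        · exact ⟨⟨_, hDj_mem.1, hDj⟩, Or.inl ⟨_, hDj_mem.2, hDj⟩⟩
    refine ⟨L₁, L₂ ⊔ Gb, i', j', ⟨?_, ?_, ?_, ?_, ?_⟩, hP, by omega, hQ, hcutB, hsegvB, hsegeB, ?_⟩
    · -- sup = ⊤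
      apply le_antisymm le_top
      constructor
      · rw [SimpleGraph.Subgraph.verts_top]
        intro z _
        have hz : z ∈ Ga.verts ∪ Gb.verts := by
          rw [← SimpleGraph.Subgraph.verts_sup, hsup, SimpleGraph.Subgraph.verts_top]
          trivial
        rw [SimpleGraph.Subgraph.verts_sup, SimpleGraph.Subgraph.verts_sup]
        rcases hz with hz | hz
        · rw [← hvertsU] at hz
          rcases hz with hz | hz
          · exact Or.inl hz
          · exact Or.inr (Or.inl hz)
        · exact Or.inr (Or.inr hz)
      · intro u v huv
        rw [SimpleGraph.Subgraph.top_adj] at huv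
        rw [SimpleGraph.Subgraph.sup_adj, SimpleGraph.Subgraph.sup_adj]
        rcases hGadj_or u v huv with (h | h) | h
        · exact Or.inl h
        · exact Or.inr (Or.inl h)
        · exact Or.inr (Or.inr h)
    · rw [SimpleGraph.Subgraph.edgeSet_sup]
      exact Set.disjoint_union_right.mpr ⟨hLdisj, hLGb H₁⟩
    · rw [hcutB]; exact hncard2
    · -- ¬ L₁ ≤ L₂ ⊔ Gb
      intro hle
      by_cases hex : ∃ w0 : Ga.verts, w0 ∈ H₁.verts ∧ w0 ∉ H₂.verts
      · obtain ⟨w0, hw1, hw2⟩ := hex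
        have hmem : (w0 : V) ∈ (L₂ ⊔ Gb).verts := hle.1 ⟨w0, hw1, rfl⟩
        rw [SimpleGraph.Subgraph.verts_sup] at hmem
        rcases hmem with h | h
        · obtain ⟨z, hz, hzeq⟩ := h
          rw [Subtype.val_injective hzeq] at hz
          exact hw2 hz
        · rcases hGaGb _ w0.2 h with h' | h'
          · rw [show w0 = ⟨x, hxv⟩ from Subtype.ext h'] at hw2; exact hw2 hxH2
          · rw [show w0 = ⟨y, hyv⟩ from Subtype.ext h'] at hw2; exact hw2 hyH2
      · push_neg at hex
        have hadjx : ∃ u v : Ga.verts, H₁.Adj u v ∧ ¬ H₂.Adj u v := by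
          by_contra hcon
          push_neg at hcon
          exact hnle₁ ⟨fun w0 hw0 => hex w0 hw0, fun u v huv => hcon u v huv⟩
        obtain ⟨u, v, hu1, hu2⟩ := hadjx
        have hGaA : Ga.Adj (u : V) (v : V) := by
          rcases H₁.adj_sub hu1 with hc | hc
          · exact hc
          · exfalso
            rw [SimpleGraph.fromEdgeSet_adj] at hc
            have hmm := hc.1
            rw [Set.mem_setOf_eq, Sym2.map_pair_eq, Sym2.eq_iff] at hmm
            have hedge : s(u, v) = s((⟨x, hxv⟩ : Ga.verts), ⟨y, hyv⟩) := by
              rcases hmm with ⟨h1, h2⟩ | ⟨h1, h2⟩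
              · rw [show u = ⟨x, hxv⟩ from Subtype.ext h1,
                  show v = ⟨y, hyv⟩ from Subtype.ext h2]
              · rw [show u = ⟨y, hyv⟩ from Subtype.ext h1,
                  show v = ⟨x, hxv⟩ from Subtype.ext h2, Sym2.eq_swap]
            apply hu2
            have hmem : s(u, v) ∈ H₂.edgeSet := by
              rw [hedge]; exact SimpleGraph.Subgraph.mem_edgeSet.mpr hB
            exact SimpleGraph.Subgraph.mem_edgeSet.mp hmem
        have hK1 : L₁.Adj (u : V) (v : V) := ⟨u.2, v.2, hGaA, hu1⟩
        have hK2 := hle.2 hK1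
        rw [SimpleGraph.Subgraph.sup_adj] at hK2
        rcases hK2 with h | h
        · obtain ⟨_, _, _, hH2a⟩ := h
          exact hu2 hH2a
        · exact Set.disjoint_left.mp hdisjE (SimpleGraph.Subgraph.mem_edgeSet.mpr hGaA)
            (SimpleGraph.Subgraph.mem_edgeSet.mpr h)
    · -- ¬ L₂ ⊔ Gb ≤ L₁
      intro hle
      have h1 : (L₂ ⊔ Gb).Adj w₁ w₂ := SimpleGraph.Subgraph.sup_adj.mpr (Or.inr hw)
      obtain ⟨_, _, hGa1, _⟩ := hle.2 h1
      exact Set.disjoint_left.mp hdisjE (SimpleGraph.Subgraph.mem_edgeSet.mpr hGa1)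
        (SimpleGraph.Subgraph.mem_edgeSet.mpr hw)
    · -- cardinality
      refine le_trans hL₂card (Set.ncard_le_ncard ?_ (Set.toFinite _))
      rw [SimpleGraph.Subgraph.verts_sup]
      exact Set.subset_union_left
  · -- Case A : the xy-edge belongs to H₁; attach Gb to the lift of H₁
    have hH1xy : H₁.Adj ⟨x, hxv⟩ ⟨y, hyv⟩ := hH12xy.resolve_right hB
    have hxH1 : (⟨x, hxv⟩ : Ga.verts) ∈ H₁.verts := hH1xy.fst_mem
    have hyH1 : (⟨y, hyv⟩ : Ga.verts) ∈ H₁.verts := hH1xy.snd_mem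
    have hcutA : (L₁ ⊔ Gb).verts ∩ L₂.verts
        = {C.f ((i' : ℕ) : ZMod m), C.f ((j' : ℕ) : ZMod m)} := by
      apply Set.Subset.antisymm
      · rintro z ⟨hz1, hz2⟩
        rw [SimpleGraph.Subgraph.verts_sup] at hz1
        rcases hz1 with hz1 | hz1
        · exact hvertsI ▸ ⟨hz1, hz2⟩
        · obtain ⟨zh, hzh, rfl⟩ := hz2
          rcases hGaGb _ zh.2 hz1 with h | h
          · exact hmap zh (by rw [show zh = ⟨x, hxv⟩ from Subtype.ext h]; exact hxH1) hzh
          · exact hmap zh (by rw [show zh = ⟨y, hyv⟩ from Subtype.ext h]; exact hyH1) hzh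
      · intro z hz
        simp only [Set.mem_insert_iff, Set.mem_singleton_iff] at hz
        rw [SimpleGraph.Subgraph.verts_sup]
        rcases hz with rfl | rfl
        · exact ⟨Or.inl ⟨_, hDi_mem.1, hDi⟩, ⟨_, hDi_mem.2, hDi⟩⟩
        · exact ⟨Or.inl ⟨_, hDj_mem.1, hDj⟩, ⟨_, hDj_mem.2, hDj⟩⟩
    refine ⟨L₁ ⊔ Gb, L₂, i', j', ⟨?_, ?_, ?_, ?_, ?_⟩, hP, by omega, hQ, hcutA, hsegv', hsege', hL₂card⟩
    · -- sup = ⊤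
      apply le_antisymm le_top
      constructor
      · rw [SimpleGraph.Subgraph.verts_top]
        intro z _
        have hz : z ∈ Ga.verts ∪ Gb.verts := by
          rw [← SimpleGraph.Subgraph.verts_sup, hsup, SimpleGraph.Subgraph.verts_top]
          trivial
        rw [SimpleGraph.Subgraph.verts_sup, SimpleGraph.Subgraph.verts_sup]
        rcases hz with hz | hz
        · rw [← hvertsU] at hz
          rcases hz with hz | hz
          · exact Or.inl (Or.inl hz)
          · exact Or.inr hz
        · exact Or.inl (Or.inr hz)
      · intro u v huv
        rw [SimpleGraph.Subgraph.top_adj] at huv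
        rw [SimpleGraph.Subgraph.sup_adj, SimpleGraph.Subgraph.sup_adj]
        rcases hGadj_or u v huv with (h | h) | h
        · exact Or.inl (Or.inl h)
        · exact Or.inr h
        · exact Or.inl (Or.inr h)
    · rw [SimpleGraph.Subgraph.edgeSet_sup]
      exact Set.disjoint_union_left.mpr ⟨hLdisj, (hLGb H₂).symm⟩
    · rw [hcutA]; exact hncard2
    · -- ¬ L₁ ⊔ Gb ≤ L₂
      intro hle
      have h1 : (L₁ ⊔ Gb).Adj w₁ w₂ := SimpleGraph.Subgraph.sup_adj.mpr (Or.inr hw)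
      obtain ⟨_, _, hGa1, _⟩ := hle.2 h1
      exact Set.disjoint_left.mp hdisjE (SimpleGraph.Subgraph.mem_edgeSet.mpr hGa1)
        (SimpleGraph.Subgraph.mem_edgeSet.mpr hw)
    · -- ¬ L₂ ≤ L₁ ⊔ Gb
      intro hle
      obtain ⟨w0, hw0, hw0cut⟩ := hbig
      have hmem : (w0 : V) ∈ (L₁ ⊔ Gb).verts := hle.1 ⟨w0, hw0, rfl⟩
      rw [SimpleGraph.Subgraph.verts_sup] at hmem
      have hw0H1 : w0 ∉ H₁.verts := by
        intro hc
        exact hw0cut (hHcut ▸ ⟨hc, hw0⟩)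
      rcases hmem with h | h
      · obtain ⟨z, hz, hzeq⟩ := h
        rw [Subtype.val_injective hzeq] at hz
        exact hw0H1 hz
      · rcases hGaGb _ w0.2 h with h' | h'
        · rw [show w0 = ⟨x, hxv⟩ from Subtype.ext h'] at hw0H1; exact hw0H1 hxH1
        · rw [show w0 = ⟨y, hyv⟩ from Subtype.ext h'] at hw0H1; exact hw0H1 hyH1


lemma tauVE_le_twothirds {V : Type} {m : ℕ} (G : SimpleGraph V) (C : OrientedCycle G m)
    (p q : ℕ) : tauVE G C p q ≤ 2/3 := by
  unfold tauVE; split_ifs <;> norm_num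

/-- The `τ` inequalities for a split along a 2-separation (from the proof of
Lemma 3.1).  Let `(G, C)` be a circuit graph, `u, v ∈ V(C)` distinct and
`e ∈ E(C)` with `u, e, v` on `C` in clockwise order (normalized: `u = C.f 0`,
`e = s(C.f a, C.f (a+1))`, `v = C.f b` with `a + 1 ≤ b < m`).  Let `(G₁, G₂)` be a
2-separation of `G` with `V(G₁ ∩ G₂) = {x, y}` where `x = C.f p ∈ V(eCv)`
(`a + 1 ≤ p ≤ b`) and `y = C.f r ∈ V(uCe)` (`r ≤ a`), `{u, v} ⊆ V(G₁)`,
`e ∈ E(G₂)`, `xCy ⊆ G₁` (clockwise indices `p, …, m + r`) and `yCx ⊆ G₂`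
(indices `r, …, p`).  Let `G₁' = G₁ + xy` with outer cycle `C₁ = xCy + yx`
(any oriented cycle tracing `C.f p, …, C.f (m + r)`), let `G₂' = G₂ + xy` with
outer cycle `C₂ = yCx + xy` (tracing `C.f r, …, C.f p`), and let `e₁ = xy`.
Then `τ_{G₁'}(e₁v) + τ_{G₂'}(ex) ≤ τ_G(ev) + 2/3` and
`τ_{G₁'}(ue₁) + τ_{G₂'}(ye) ≤ τ_G(ue) + 2/3`.
(In the chosen enumerations: on `C₁`, the vertex `x` has index `0`, `v` has index
`b − p`, `u` has index `m − p`, `y` has index `m − p + r`, and `e₁` is the closing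
edge; on `C₂`, `y` has index `0`, `e` spans indices `a − r, a − r + 1`, `x` has
index `p − r`, and `e₁ = xy` is the closing edge.) -/
theorem tau_inequalities_of_two_separation
    {V : Type} [Fintype V] [DecidableEq V] (G : SimpleGraph V)
    {m : ℕ} (C : OrientedCycle G m) (hGC : IsCircuitGraph G C)
    (a b : ℕ) (hab : a + 1 ≤ b) (hbm : b < m)
    (p r : ℕ) (hp₁ : a + 1 ≤ p) (hp₂ : p ≤ b) (hr : r ≤ a)
    (G₁ G₂ : G.Subgraph) (hsep : IsKSeparation G 2 G₁ G₂)
    (hxy : G₁.verts ∩ G₂.verts = {C.f (p : ZMod m), C.f (r : ZMod m)})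
    (huG₁ : C.f 0 ∈ G₁.verts) (hvG₁ : C.f (b : ZMod m) ∈ G₁.verts)
    (heG₂ : s(C.f (a : ZMod m), C.f ((a : ZMod m) + 1)) ∈ G₂.edgeSet)
    (hxCy_v : ∀ k : ℕ, p ≤ k → k ≤ m + r → C.f (k : ZMod m) ∈ G₁.verts)
    (hxCy_e : ∀ k : ℕ, p ≤ k → k < m + r →
      G₁.Adj (C.f (k : ZMod m)) (C.f ((k : ZMod m) + 1)))
    (hyCx_v : ∀ k : ℕ, r ≤ k → k ≤ p → C.f (k : ZMod m) ∈ G₂.verts)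
    (hyCx_e : ∀ k : ℕ, r ≤ k → k < p →
      G₂.Adj (C.f (k : ZMod m)) (C.f ((k : ZMod m) + 1))) :
    ∀ C₁ : OrientedCycle
        (G₁.coe ⊔ SimpleGraph.fromEdgeSet
          {e' : Sym2 G₁.verts |
            Sym2.map (Subtype.val) e' = s(C.f (p : ZMod m), C.f (r : ZMod m))})
        (m - p + r + 1),
      (∀ i : ZMod (m - p + r + 1), ((C₁.f i : V) = C.f ((p + i.val : ℕ) : ZMod m))) →
    ∀ C₂ : OrientedCycle
        (G₂.coe ⊔ SimpleGraph.fromEdgeSet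
          {e' : Sym2 G₂.verts |
            Sym2.map (Subtype.val) e' = s(C.f (p : ZMod m), C.f (r : ZMod m))})
        (p - r + 1),
      (∀ i : ZMod (p - r + 1), ((C₂.f i : V) = C.f ((r + i.val : ℕ) : ZMod m))) →
      tauVE _ C₁ 0 (b - p) + tauVE _ C₂ (a - r + 1) (p - r)
          ≤ tauVE G C (a + 1) b + 2/3 ∧
      tauVE _ C₁ (m - p) (m - p + r) + tauVE _ C₂ 0 (a - r)
          ≤ tauVE G C 0 a + 2/3 := by
  intro C₁ hC₁ C₂ hC₂
  obtain ⟨hsupG, hdisjG, hcardG, hn1, hn2⟩ := hsep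
  haveI : NeZero m := ⟨by have := C.three_le; omega⟩
  have hxmem : C.f (p : ZMod m) ∈ G₁.verts ∩ G₂.verts := by
    rw [hxy]; exact Set.mem_insert _ _
  have hymem : C.f (r : ZMod m) ∈ G₁.verts ∩ G₂.verts := by
    rw [hxy]; exact Set.mem_insert_of_mem _ rfl
  have hfne : ∀ α β : ℕ, α < m → β < m → α ≠ β →
      C.f ((α : ℕ) : ZMod m) ≠ C.f ((β : ℕ) : ZMod m) := by
    intro α β hα hβ hne h
    have h2 := congrArg ZMod.val (C.inj h)
    rw [ZMod.val_natCast_of_lt hα, ZMod.val_natCast_of_lt hβ] at h2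
    exact hne h2
  have hfeq : ∀ α β : ℕ, α = m + β → ((α : ℕ) : ZMod m) = ((β : ℕ) : ZMod m) := by
    intro α β hab
    rw [hab]; push_cast; simp [ZMod.natCast_self]
  have hxyne : C.f (p : ZMod m) ≠ C.f (r : ZMod m) :=
    hfne p r (by omega) (by omega) (by omega)
  have hew2 : G₂.Adj (C.f (a : ZMod m)) (C.f ((a : ZMod m) + 1)) :=
    SimpleGraph.Subgraph.mem_edgeSet.mp heG₂
  have hew1 : G₁.Adj (C.f (p : ZMod m)) (C.f ((p : ZMod m) + 1)) :=
    hxCy_e p le_rfl (by omega)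
  have hsupG' : G₂ ⊔ G₁ = ⊤ := by rw [sup_comm]; exact hsupG
  have hxy' : G₂.verts ∩ G₁.verts = {C.f (p : ZMod m), C.f (r : ZMod m)} := by
    rw [Set.inter_comm]; exact hxy
  -- the four transfer implications
  have imp1 : ¬ SegGood _ C₁ 0 (b - p) → ¬ SegGood G C (a + 1) b := by
    intro hbad
    rw [SegGood, not_not] at hbad
    obtain ⟨H₁, H₂, i, j, hsepA, h0i, hij, hjq, hHcut, hsegv, hsege, hcard⟩ := hbad
    refine transfer G C G₁ G₂ hsupG hdisjG _ _ hxy hxyne hxmem.1 hymem.1 _ _ hew2 C₁ p hC₁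
      (a + 1) b i j (p + i) (p + j) hij (by omega) rfl (by omega) (by omega) (by omega)
      ?_ H₁ H₂ hsepA hHcut hsegv hsege hcard
    intro k hk1 hk2 hEq
    rw [Sym2.eq_iff] at hEq
    rcases hEq with ⟨h1, h2⟩ | ⟨h1, h2⟩
    · have e1 : p + k = p := by
        have h3 := congrArg ZMod.val (C.inj h1)
        rwa [ZMod.val_natCast_of_lt (by omega), ZMod.val_natCast_of_lt (by omega)] at h3
      have e2 : p + k + 1 = r := by
        have h3 := congrArg ZMod.val (C.inj h2)
        rwa [ZMod.val_natCast_of_lt (by omega), ZMod.val_natCast_of_lt (by omega)] at h3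
      omega
    · have e1 : p + k = r := by
        have h3 := congrArg ZMod.val (C.inj h1)
        rwa [ZMod.val_natCast_of_lt (by omega), ZMod.val_natCast_of_lt (by omega)] at h3
      omega
  have imp2 : ¬ SegGood _ C₂ (a - r + 1) (p - r) → ¬ SegGood G C (a + 1) b := by
    intro hbad
    rw [SegGood, not_not] at hbad
    obtain ⟨H₁, H₂, i, j, hsepA, h0i, hij, hjq, hHcut, hsegv, hsege, hcard⟩ := hbad
    refine transfer G C G₂ G₁ hsupG' hdisjG.symm _ _ hxy' hxyne hxmem.2 hymem.2 _ _ hew1 C₂ r hC₂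
      (a + 1) b i j (r + i) (r + j) hij (by omega) rfl (by omega) (by omega) (by omega)
      ?_ H₁ H₂ hsepA hHcut hsegv hsege hcard
    intro k hk1 hk2 hEq
    rw [Sym2.eq_iff] at hEq
    rcases hEq with ⟨h1, h2⟩ | ⟨h1, h2⟩
    · have e1 : r + k = p := by
        have h3 := congrArg ZMod.val (C.inj h1)
        rwa [ZMod.val_natCast_of_lt (by omega), ZMod.val_natCast_of_lt (by omega)] at h3
      omega
    · have e1 : r + k = r := by
        have h3 := congrArg ZMod.val (C.inj h1)
        rwa [ZMod.val_natCast_of_lt (by omega), ZMod.val_natCast_of_lt (by omega)] at h3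
      omega
  have imp3 : ¬ SegGood _ C₁ (m - p) (m - p + r) → ¬ SegGood G C 0 a := by
    intro hbad
    rw [SegGood, not_not] at hbad
    obtain ⟨H₁, H₂, i, j, hsepA, h0i, hij, hjq, hHcut, hsegv, hsege, hcard⟩ := hbad
    refine transfer G C G₁ G₂ hsupG hdisjG _ _ hxy hxyne hxmem.1 hymem.1 _ _ hew2 C₁ p hC₁
      0 a i j (i - (m - p)) (j - (m - p)) hij (by omega)
      (hfeq _ _ (by omega)) (by omega) (by omega) (by omega)
      ?_ H₁ H₂ hsepA hHcut hsegv hsege hcard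
    intro k hk1 hk2 hEq
    rw [Sym2.eq_iff] at hEq
    have hred : ((p + k : ℕ) : ZMod m) = ((p + k - m : ℕ) : ZMod m) := hfeq _ _ (by omega)
    rcases hEq with ⟨h1, h2⟩ | ⟨h1, h2⟩
    · rw [hred] at h1
      have e1 : p + k - m = p := by
        have h3 := congrArg ZMod.val (C.inj h1)
        rwa [ZMod.val_natCast_of_lt (by omega), ZMod.val_natCast_of_lt (by omega)] at h3
      omega
    · rw [hred] at h1
      have e1 : p + k - m = r := by
        have h3 := congrArg ZMod.val (C.inj h1)
        rwa [ZMod.val_natCast_of_lt (by omega), ZMod.val_natCast_of_lt (by omega)] at h3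
      omega
  have imp4 : ¬ SegGood _ C₂ 0 (a - r) → ¬ SegGood G C 0 a := by
    intro hbad
    rw [SegGood, not_not] at hbad
    obtain ⟨H₁, H₂, i, j, hsepA, h0i, hij, hjq, hHcut, hsegv, hsege, hcard⟩ := hbad
    refine transfer G C G₂ G₁ hsupG' hdisjG.symm _ _ hxy' hxyne hxmem.2 hymem.2 _ _ hew1 C₂ r hC₂
      0 a i j (r + i) (r + j) hij (by omega) rfl (by omega) (by omega) (by omega)
      ?_ H₁ H₂ hsepA hHcut hsegv hsege hcard
    intro k hk1 hk2 hEq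
    rw [Sym2.eq_iff] at hEq
    rcases hEq with ⟨h1, h2⟩ | ⟨h1, h2⟩
    · have e1 : r + k = p := by
        have h3 := congrArg ZMod.val (C.inj h1)
        rwa [ZMod.val_natCast_of_lt (by omega), ZMod.val_natCast_of_lt (by omega)] at h3
      omega
    · have e1 : r + k = r := by
        have h3 := congrArg ZMod.val (C.inj h1)
        rwa [ZMod.val_natCast_of_lt (by omega), ZMod.val_natCast_of_lt (by omega)] at h3
      have e2 : r + k + 1 = p := by
        have h3 := congrArg ZMod.val (C.inj h2)
        rwa [ZMod.val_natCast_of_lt (by omega), ZMod.val_natCast_of_lt (by omega)] at h3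
      omega
  constructor
  · by_cases hgood : SegGood G C (a + 1) b
    · have hg1 : SegGood _ C₁ 0 (b - p) := by
        by_contra h; exact imp1 h hgood
      have hg2 : SegGood _ C₂ (a - r + 1) (p - r) := by
        by_contra h; exact imp2 h hgood
      unfold tauVE
      rw [if_neg (not_not_intro hg1), if_neg (not_not_intro hg2), if_neg (not_not_intro hgood)]
      split_ifs <;> first | (exfalso; omega) | norm_num
    · have hG : tauVE G C (a + 1) b = 2/3 := by
        unfold tauVE; rw [if_pos hgood]
      rw [hG]
      have h1 := tauVE_le_twothirds _ C₁ 0 (b - p)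
      have h2 := tauVE_le_twothirds _ C₂ (a - r + 1) (p - r)
      exact add_le_add h1 h2
  · by_cases hgood : SegGood G C 0 a
    · have hg3 : SegGood _ C₁ (m - p) (m - p + r) := by
        by_contra h; exact imp3 h hgood
      have hg4 : SegGood _ C₂ 0 (a - r) := by
        by_contra h; exact imp4 h hgood
      unfold tauVE
      rw [if_neg (not_not_intro hg3), if_neg (not_not_intro hg4), if_neg (not_not_intro hgood)]
      split_ifs <;> first | (exfalso; omega) | norm_num
    · have hG : tauVE G C 0 a = 2/3 := by
        unfold tauVE; rw [if_pos hgood]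
      rw [hG]
      have h1 := tauVE_le_twothirds _ C₁ (m - p) (m - p + r)
      have h2 := tauVE_le_twothirds _ C₂ 0 (a - r)
      exact add_le_add h1 h2


end Paper
end
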